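/- arXiv:2510.09345 — 4 statements merged into one kernel-verified Lean document; each statement's English description precedes it below -/
import Mathlib

section
/- A time-like curve γ : I → 𝕃⁴ parametrized by proper time admits a generalized Bishop frame of type D if and only if there exist a smooth map D₁ : I → ℝ⁴ and a smooth function d₁ : I → ℝ such that, pointwise, ⟨D₁,D₁⟩ = 1, ⟨T,D₁⟩ = 0 and T' = d₁D₁. -/
open Set Real

noncomputable section

/-- The Minkowski form on `ℝ⁴ = 𝕃⁴`: `⟨x,y⟩ = -x₀y₀ + x₁y₁ + x₂y₂ + x₃y₃`. -/
def mink (x y : Fin 4 → ℝ) : ℝ :=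
  -(x 0 * y 0) + x 1 * y 1 + x 2 * y 2 + x 3 * y 3

/-- `(T, Z₁, Z₂, Z₃)` is an orthonormal frame along a time-like curve with tangent `T`:
the `Zᵢ` are smooth on `I`, pairwise orthonormal (space-like) and orthogonal to `T`. -/
def OrthFrame (I : Set ℝ) (T Z₁ Z₂ Z₃ : ℝ → Fin 4 → ℝ) : Prop :=
  ContDiffOn ℝ (⊤ : ℕ∞) Z₁ I ∧ ContDiffOn ℝ (⊤ : ℕ∞) Z₂ I ∧ ContDiffOn ℝ (⊤ : ℕ∞) Z₃ I ∧
  ∀ s ∈ I,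
    mink (Z₁ s) (Z₁ s) = 1 ∧ mink (Z₂ s) (Z₂ s) = 1 ∧ mink (Z₃ s) (Z₃ s) = 1 ∧
    mink (Z₁ s) (Z₂ s) = 0 ∧ mink (Z₁ s) (Z₃ s) = 0 ∧ mink (Z₂ s) (Z₃ s) = 0 ∧
    mink (T s) (Z₁ s) = 0 ∧ mink (T s) (Z₂ s) = 0 ∧ mink (T s) (Z₃ s) = 0

/-- `γ` is a smooth time-like curve parametrized by proper time on `I`. -/
def ProperTime (I : Set ℝ) (γ : ℝ → Fin 4 → ℝ) : Prop :=
  ContDiffOn ℝ (⊤ : ℕ∞) γ I ∧ ∀ s ∈ I, mink (deriv γ s) (deriv γ s) = -1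

/-- Three smooth real functions on `I`. -/
def Smooth3 (I : Set ℝ) (x₁ x₂ x₃ : ℝ → ℝ) : Prop :=
  ContDiffOn ℝ (⊤ : ℕ∞) x₁ I ∧ ContDiffOn ℝ (⊤ : ℕ∞) x₂ I ∧ ContDiffOn ℝ (⊤ : ℕ∞) x₃ I

/-- `γ` admits a generalized Bishop frame of type B. -/
def AdmitsB (I : Set ℝ) (γ : ℝ → Fin 4 → ℝ) : Prop :=
  ∃ (Z₁ Z₂ Z₃ : ℝ → Fin 4 → ℝ) (x₁ x₂ x₃ : ℝ → ℝ),
    OrthFrame I (deriv γ) Z₁ Z₂ Z₃ ∧ Smooth3 I x₁ x₂ x₃ ∧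
    ∀ s ∈ I,
      deriv (deriv γ) s = x₁ s • Z₁ s + x₂ s • Z₂ s + x₃ s • Z₃ s ∧
      deriv Z₁ s = x₁ s • deriv γ s ∧
      deriv Z₂ s = x₂ s • deriv γ s ∧
      deriv Z₃ s = x₃ s • deriv γ s

/-- `γ` admits a generalized Bishop frame of type C. -/
def AdmitsC (I : Set ℝ) (γ : ℝ → Fin 4 → ℝ) : Prop :=
  ∃ (Z₁ Z₂ Z₃ : ℝ → Fin 4 → ℝ) (x₁ x₂ x₃ : ℝ → ℝ),
    OrthFrame I (deriv γ) Z₁ Z₂ Z₃ ∧ Smooth3 I x₁ x₂ x₃ ∧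
    ∀ s ∈ I,
      deriv (deriv γ) s = x₁ s • Z₁ s + x₂ s • Z₂ s ∧
      deriv Z₁ s = x₁ s • deriv γ s + x₃ s • Z₃ s ∧
      deriv Z₂ s = x₂ s • deriv γ s ∧
      deriv Z₃ s = (-(x₃ s)) • Z₁ s

/-- `γ` admits a generalized Bishop frame of type D. -/
def AdmitsD (I : Set ℝ) (γ : ℝ → Fin 4 → ℝ) : Prop :=
  ∃ (Z₁ Z₂ Z₃ : ℝ → Fin 4 → ℝ) (x₁ x₂ x₃ : ℝ → ℝ),
    OrthFrame I (deriv γ) Z₁ Z₂ Z₃ ∧ Smooth3 I x₁ x₂ x₃ ∧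
    ∀ s ∈ I,
      deriv (deriv γ) s = x₁ s • Z₁ s ∧
      deriv Z₁ s = x₁ s • deriv γ s + x₂ s • Z₂ s + x₃ s • Z₃ s ∧
      deriv Z₂ s = (-(x₂ s)) • Z₁ s ∧
      deriv Z₃ s = (-(x₃ s)) • Z₁ s

/-- `γ` admits a generalized Bishop frame of type F. -/
def AdmitsF (I : Set ℝ) (γ : ℝ → Fin 4 → ℝ) : Prop :=
  ∃ (Z₁ Z₂ Z₃ : ℝ → Fin 4 → ℝ) (x₁ x₂ x₃ : ℝ → ℝ),
    OrthFrame I (deriv γ) Z₁ Z₂ Z₃ ∧ Smooth3 I x₁ x₂ x₃ ∧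
    ∀ s ∈ I,
      deriv (deriv γ) s = x₁ s • Z₁ s ∧
      deriv Z₁ s = x₁ s • deriv γ s + x₂ s • Z₂ s ∧
      deriv Z₂ s = (-(x₂ s)) • Z₁ s + x₃ s • Z₃ s ∧
      deriv Z₃ s = (-(x₃ s)) • Z₂ s

namespace LorentzAux
lemma mink_comm (x y : Fin 4 → ℝ) : mink x y = mink y x := by simp [mink]; ring
lemma mink_add_left (x y z : Fin 4 → ℝ) : mink (x + y) z = mink x z + mink y z := by
  simp [mink]; ring
lemma mink_add_right (x y z : Fin 4 → ℝ) : mink x (y + z) = mink x y + mink x z := by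
  simp [mink]; ring
lemma mink_smul_left (c : ℝ) (x y : Fin 4 → ℝ) : mink (c • x) y = c * mink x y := by
  simp [mink]; ring
lemma mink_smul_right (c : ℝ) (x y : Fin 4 → ℝ) : mink x (c • y) = c * mink x y := by
  simp [mink]; ring
lemma mink_neg_left (x y : Fin 4 → ℝ) : mink (-x) y = -mink x y := by simp [mink]; ring
lemma mink_neg_right (x y : Fin 4 → ℝ) : mink x (-y) = -mink x y := by simp [mink]; ring
lemma mink_sub_left (x y z : Fin 4 → ℝ) : mink (x - y) z = mink x z - mink y z := by
  simp [mink]; ring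
lemma mink_sub_right (x y z : Fin 4 → ℝ) : mink x (y - z) = mink x y - mink x z := by
  simp [mink]; ring
lemma mink_zero_left (y : Fin 4 → ℝ) : mink 0 y = 0 := by simp [mink]
lemma mink_zero_right (y : Fin 4 → ℝ) : mink y 0 = 0 := by simp [mink]

lemma abs_mink_le (u x : Fin 4 → ℝ) : |mink u x| ≤ 4 * ‖u‖ * ‖x‖ := by
  have hu : ∀ i, |u i| ≤ ‖u‖ := fun i => by
    simpa using norm_le_pi_norm u i
  have hx : ∀ i, |x i| ≤ ‖x‖ := fun i => by
    simpa using norm_le_pi_norm x i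
  have hterm : ∀ i, |u i * x i| ≤ ‖u‖ * ‖x‖ := fun i => by
    rw [abs_mul]
    exact mul_le_mul (hu i) (hx i) (abs_nonneg _) (norm_nonneg _)
  have h1 := abs_add_le (-(u 0 * x 0) + u 1 * x 1 + u 2 * x 2) (u 3 * x 3)
  have h2 := abs_add_le (-(u 0 * x 0) + u 1 * x 1) (u 2 * x 2)
  have h3 := abs_add_le (-(u 0 * x 0)) (u 1 * x 1)
  have h4 : |(-(u 0 * x 0))| = |u 0 * x 0| := abs_neg _
  have := hterm 0; have := hterm 1; have := hterm 2; have := hterm 3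
  simp only [mink]
  linarith

lemma hasDerivAt_mink {f g : ℝ → Fin 4 → ℝ} {f' g' : Fin 4 → ℝ} {s : ℝ}
    (hf : HasDerivAt f f' s) (hg : HasDerivAt g g' s) :
    HasDerivAt (fun t => mink (f t) (g t)) (mink f' (g s) + mink (f s) g') s := by
  have pf : ∀ i : Fin 4, HasDerivAt (fun t => f t i) (f' i) s := fun i =>
    (ContinuousLinearMap.proj (R := ℝ) (φ := fun _ : Fin 4 => ℝ) i).hasFDerivAt.comp_hasDerivAt s hf
  have pg : ∀ i : Fin 4, HasDerivAt (fun t => g t i) (g' i) s := fun i =>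
    (ContinuousLinearMap.proj (R := ℝ) (φ := fun _ : Fin 4 => ℝ) i).hasFDerivAt.comp_hasDerivAt s hg
  have h := ((((pf 0).mul (pg 0)).neg.add ((pf 1).mul (pg 1))).add
      ((pf 2).mul (pg 2))).add ((pf 3).mul (pg 3))
  have e1 : (fun t => mink (f t) (g t)) = fun x =>
      -(f x 0 * g x 0) + f x 1 * g x 1 + f x 2 * g x 2 + f x 3 * g x 3 := by
    funext t; simp [mink]
  rw [e1]
  refine HasDerivAt.congr_deriv h ?_
  simp only [mink]; ring

lemma contDiffOn_mink {n : WithTop ℕ∞} {f g : ℝ → Fin 4 → ℝ} {I : Set ℝ}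
    (hf : ContDiffOn ℝ n f I) (hg : ContDiffOn ℝ n g I) :
    ContDiffOn ℝ n (fun t => mink (f t) (g t)) I := by
  have pf : ∀ i : Fin 4, ContDiffOn ℝ n (fun t => f t i) I := fun i =>
    (ContinuousLinearMap.proj (R := ℝ) (φ := fun _ : Fin 4 => ℝ) i).contDiff.comp_contDiffOn hf
  have pg : ∀ i : Fin 4, ContDiffOn ℝ n (fun t => g t i) I := fun i =>
    (ContinuousLinearMap.proj (R := ℝ) (φ := fun _ : Fin 4 => ℝ) i).contDiff.comp_contDiffOn hg
  have h := ((((pf 0).mul (pg 0)).neg.add ((pf 1).mul (pg 1))).add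
      ((pf 2).mul (pg 2))).add ((pf 3).mul (pg 3))
  exact h.congr (fun t _ => by simp [mink])

lemma continuousOn_mink {f g : ℝ → Fin 4 → ℝ} {I : Set ℝ}
    (hf : ContinuousOn f I) (hg : ContinuousOn g I) :
    ContinuousOn (fun t => mink (f t) (g t)) I := by
  have pf : ∀ i : Fin 4, ContinuousOn (fun t => f t i) I := fun i =>
    (continuous_apply i).comp_continuousOn hf
  have pg : ∀ i : Fin 4, ContinuousOn (fun t => g t i) I := fun i =>
    (continuous_apply i).comp_continuousOn hg
  have h := ((((pf 0).mul (pg 0)).neg.add ((pf 1).mul (pg 1))).add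
      ((pf 2).mul (pg 2))).add ((pf 3).mul (pg 3))
  exact h.congr (fun t _ => by simp [mink])

/-- Minkowski reflection through a non-null vector `p`. -/
def mrefl (p x : Fin 4 → ℝ) : Fin 4 → ℝ := x - (2 * mink x p / mink p p) • p

lemma mrefl_mink {p : Fin 4 → ℝ} (hp : mink p p ≠ 0) (x y : Fin 4 → ℝ) :
    mink (mrefl p x) (mrefl p y) = mink x y := by
  simp only [mrefl, mink_sub_left, mink_sub_right, mink_smul_left, mink_smul_right]
  rw [mink_comm p y]
  field_simp
  ring

lemma mrefl_mrefl {p : Fin 4 → ℝ} (hp : mink p p ≠ 0) (x : Fin 4 → ℝ) :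
    mrefl p (mrefl p x) = x := by
  simp only [mrefl, mink_sub_left, mink_smul_left]
  rw [sub_sub, ← add_smul]
  have h : (2 * mink x p / mink p p +
      2 * (mink x p - 2 * mink x p / mink p p * mink p p) / mink p p) = 0 := by
    field_simp; ring
  rw [h, zero_smul, sub_zero]

example : True := trivial

lemma mink_eq_sum (x y : Fin 4 → ℝ) :
    mink x y = (∑ i : Fin 4, x i * y i) - 2 * (x 0 * y 0) := by
  simp [mink, Fin.sum_univ_four]; ring

lemma euclid_complete {w : Fin 4 → ℝ} (hw : ∑ i : Fin 4, w i * w i = 1) (hw0 : w 0 = 0) :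
    ∃ u' v' : Fin 4 → ℝ,
      (∑ i : Fin 4, u' i * u' i) = 1 ∧ (∑ i : Fin 4, v' i * v' i) = 1 ∧
      (∑ i : Fin 4, u' i * v' i) = 0 ∧
      (∑ i : Fin 4, u' i * w i) = 0 ∧ (∑ i : Fin 4, v' i * w i) = 0 ∧
      u' 0 = 0 ∧ v' 0 = 0 := by
  classical
  set E := EuclideanSpace ℝ (Fin 4)
  set e₀ : E := EuclideanSpace.single 0 (1:ℝ) with he₀
  set wE : E := (WithLp.equiv 2 (Fin 4 → ℝ)).symm w with hwE
  have hwEi : ∀ i, wE i = w i := fun i => rfl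
  have he₀i : ∀ i, e₀ i = if i = 0 then 1 else 0 := fun i => by
    simp [he₀, EuclideanSpace.single_apply]
  have hinner : ∀ x y : E, (inner ℝ x y : ℝ) = ∑ i : Fin 4, x i * y i := fun x y => by
    rw [PiLp.inner_apply]
    simp [mul_comm]
  set v : Fin 4 → E := ![e₀, wE, 0, 0] with hv
  have hon : Orthonormal ℝ (({0,1} : Set (Fin 4)).restrict v) := by
    rw [orthonormal_iff_ite]
    rintro ⟨i, hi⟩ ⟨j, hj⟩
    simp only [Set.mem_insert_iff, Set.mem_singleton_iff] at hi hj
    have key : ∀ x y : Fin 4, (x = 0 ∨ x = 1) → (y = 0 ∨ y = 1) →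
        (inner ℝ (v x) (v y) : ℝ) = if x = y then 1 else 0 := by
      rintro x y (rfl | rfl) (rfl | rfl) <;> rw [hinner] <;>
        simp [hv, hinner, he₀i, hwEi, Fin.sum_univ_four, hw0, hw]
    show inner ℝ (v i) (v j) = _
    rw [key i j hi hj]
    simp [Subtype.ext_iff]
  have hcard : Module.finrank ℝ E = Fintype.card (Fin 4) := by simp [E]
  obtain ⟨B, hB⟩ := hon.exists_orthonormalBasis_extension_of_card_eq hcard
  have hB0 : B 0 = e₀ := hB 0 (by simp)
  have hB1 : B 1 = wE := hB 1 (by simp)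
  have hBij := orthonormal_iff_ite.mp B.orthonormal
  refine ⟨fun i => B 2 i, fun i => B 3 i, ?_, ?_, ?_, ?_, ?_, ?_, ?_⟩
  · have := hBij 2 2; rw [hinner] at this; simpa using this
  · have := hBij 3 3; rw [hinner] at this; simpa using this
  · have := hBij 2 3; rw [hinner] at this; simpa using this
  · have := hBij 2 1; rw [hB1, hinner] at this; simpa [hwEi] using this
  · have := hBij 3 1; rw [hB1, hinner] at this; simpa [hwEi] using this
  · have := hBij 2 0; rw [hB0, hinner] at this
    simpa [he₀i, Fin.sum_univ_four, mul_comm] using this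
  · have := hBij 3 0; rw [hB0, hinner] at this
    simpa [he₀i, Fin.sum_univ_four, mul_comm] using this

lemma complete_frame {T₀ D₀ : Fin 4 → ℝ} (hT : mink T₀ T₀ = -1) (hD : mink D₀ D₀ = 1)
    (hTD : mink T₀ D₀ = 0) :
    ∃ u v : Fin 4 → ℝ, mink u u = 1 ∧ mink v v = 1 ∧ mink u v = 0 ∧
      mink T₀ u = 0 ∧ mink T₀ v = 0 ∧ mink D₀ u = 0 ∧ mink D₀ v = 0 := by
  classical
  -- σ is the sign of T₀ 0
  set σ : ℝ := if 0 ≤ T₀ 0 then (1:ℝ) else -1 with hσdef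
  have hT00 : 1 ≤ (T₀ 0) ^ 2 := by
    have := hT
    simp only [mink] at this
    nlinarith [sq_nonneg (T₀ 1), sq_nonneg (T₀ 2), sq_nonneg (T₀ 3)]
  have hσT : 1 ≤ σ * T₀ 0 := by
    rcases le_or_gt 0 (T₀ 0) with h | h
    · rw [hσdef, if_pos h, one_mul]
      nlinarith
    · rw [hσdef, if_neg (not_le.mpr h)]
      nlinarith
  set a : Fin 4 → ℝ := ![σ, 0, 0, 0] with hadef
  have haa : mink a a = -1 := by
    have hσ2 : σ * σ = 1 := by
      rcases le_or_gt 0 (T₀ 0) with h | h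
      · simp [hσdef, h]
      · simp [hσdef, not_le.mpr h]
    simp [mink, hadef, hσ2]
  have ha_mink : ∀ x, mink a x = -(σ * x 0) := fun x => by simp [mink, hadef]
  have haT : mink a T₀ ≤ -1 := by rw [ha_mink]; linarith
  set p : Fin 4 → ℝ := a + T₀ with hpdef
  have hpp : mink p p = 2 * (mink a T₀ - 1) := by
    rw [hpdef, mink_add_left, mink_add_right, mink_add_right, haa, hT, mink_comm T₀ a]
    ring
  have hppne : mink p p ≠ 0 := by rw [hpp]; nlinarith
  have hTTne : mink T₀ T₀ ≠ 0 := by rw [hT]; norm_num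
  set M : (Fin 4 → ℝ) → (Fin 4 → ℝ) := fun x => mrefl p (mrefl T₀ x) with hMdef
  set L : (Fin 4 → ℝ) → (Fin 4 → ℝ) := fun x => mrefl T₀ (mrefl p x) with hLdef
  have hLM : ∀ x, L (M x) = x := fun x => by
    rw [hMdef, hLdef]; simp only
    rw [mrefl_mrefl hppne, mrefl_mrefl hTTne]
  have hMmink : ∀ x y, mink (M x) (M y) = mink x y := fun x y => by
    rw [hMdef]; simp only
    rw [mrefl_mink hppne, mrefl_mink hTTne]
  have hLmink : ∀ x y, mink (L x) (L y) = mink x y := fun x y => by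
    rw [hLdef]; simp only
    rw [mrefl_mink hTTne, mrefl_mink hppne]
  -- M T₀ = a
  have hMT : M T₀ = a := by
    have h1 : mrefl T₀ T₀ = -T₀ := by
      rw [mrefl, hT]
      norm_num
      module
    have h2 : mrefl p (-T₀) = -(mrefl p T₀) := by
      rw [mrefl, mrefl]
      have : mink (-T₀) p = -(mink T₀ p) := by
        rw [mink_comm, mink_comm T₀ p]
        simp [mink]; ring
      rw [this]
      module
    have h3 : mrefl p T₀ = -a := by
      have hTp : mink T₀ p = mink a T₀ - 1 := by
        rw [hpdef, mink_add_right, hT, mink_comm T₀ a]; ring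
      rw [mrefl, hTp, hpp]
      have hne : mink a T₀ - 1 ≠ 0 := by nlinarith
      have : 2 * (mink a T₀ - 1) / (2 * (mink a T₀ - 1)) = 1 := div_self (by nlinarith)
      rw [this, one_smul, hpdef]
      module
    rw [hMdef]; simp only
    rw [h1, h2, h3, neg_neg]
  -- the transported normal vector
  set w : Fin 4 → ℝ := M D₀ with hwdef
  have hww : mink w w = 1 := by rw [hwdef, hMmink]; exact hD
  have hwa : mink a w = 0 := by rw [← hMT, hwdef, hMmink]; exact hTD
  have hσne : σ ≠ 0 := by
    rcases le_or_gt 0 (T₀ 0) with h | h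
    · simp [hσdef, h]
    · simp [hσdef, not_le.mpr h]
  have hw0 : w 0 = 0 := by
    rw [ha_mink] at hwa
    have : σ * w 0 = 0 := by linarith
    rcases mul_eq_zero.mp this with h | h
    · exact absurd h hσne
    · exact h
  have hsum : ∑ i : Fin 4, w i * w i = 1 := by
    rw [mink_eq_sum, hw0] at hww; linarith
  obtain ⟨u', v', h1, h2, h3, h4, h5, h6, h7⟩ := euclid_complete hsum hw0
  have hLa : L a = T₀ := by rw [← hMT, hLM]
  have hLw : L w = D₀ := by rw [hwdef, hLM]
  have hu'u' : mink u' u' = 1 := by rw [mink_eq_sum, h6]; simp [h1]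
  have hv'v' : mink v' v' = 1 := by rw [mink_eq_sum, h7]; simp [h2]
  have hu'v' : mink u' v' = 0 := by rw [mink_eq_sum, h6]; simp [h3]
  have hau' : mink a u' = 0 := by rw [ha_mink, h6]; ring
  have hav' : mink a v' = 0 := by rw [ha_mink, h7]; ring
  have hwu' : mink w u' = 0 := by
    rw [mink_eq_sum, hw0]
    have : ∑ i : Fin 4, w i * u' i = 0 := by
      rw [← h4]; exact Finset.sum_congr rfl fun i _ => mul_comm _ _
    simp [this]
  have hwv' : mink w v' = 0 := by
    rw [mink_eq_sum, hw0]
    have : ∑ i : Fin 4, w i * v' i = 0 := by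
      rw [← h5]; exact Finset.sum_congr rfl fun i _ => mul_comm _ _
    simp [this]
  refine ⟨L u', L v', ?_, ?_, ?_, ?_, ?_, ?_, ?_⟩
  · rw [hLmink]; exact hu'u'
  · rw [hLmink]; exact hv'v'
  · rw [hLmink]; exact hu'v'
  · rw [← hLa, hLmink]; exact hau'
  · rw [← hLa, hLmink]; exact hav'
  · rw [← hLw, hLmink]; exact hwu'
  · rw [← hLw, hLmink]; exact hwv'

lemma hasDerivWithinAt_singleton' (f : ℝ → Fin 4 → ℝ) (x : ℝ) (v : Fin 4 → ℝ) :
    HasDerivWithinAt f v {x} x := by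
  rw [hasDerivWithinAt_iff_tendsto_slope]
  simp [Set.diff_self]

/-- Basic Picard–Lindelöf step for the linear ODE `z' = mink (G s) z • F s`. -/
lemma pl_step {F G : ℝ → Fin 4 → ℝ} {I : Set ℝ}
    (hF : ContinuousOn F I) (hG : ContinuousOn G I)
    {M : ℝ} (hM : 0 ≤ M) {a b t₀ : ℝ} (hab : Icc a b ⊆ I) (ht₀ : t₀ ∈ Icc a b)
    (hbound : ∀ s ∈ Icc a b, 4 * ‖G s‖ * ‖F s‖ ≤ M)
    (hstep : (b - a) * (M + 1) ≤ 1 / 2)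
    (x₀ : Fin 4 → ℝ) :
    ∃ z : ℝ → Fin 4 → ℝ, z t₀ = x₀ ∧ ∀ s ∈ Icc a b,
      HasDerivWithinAt z (mink (G s) (z s) • F s) (Icc a b) s := by
  have hablr : a ≤ b := ht₀.1.trans ht₀.2
  have hkey : ∀ s ∈ Icc a b, ∀ x y : Fin 4 → ℝ,
      ‖mink (G s) x • F s - mink (G s) y • F s‖ ≤ M * ‖x - y‖ := by
    intro s hs x y
    rw [← sub_smul, ← mink_sub_right, norm_smul]
    calc ‖mink (G s) (x - y)‖ * ‖F s‖ ≤ (4 * ‖G s‖ * ‖x - y‖) * ‖F s‖ := by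
          apply mul_le_mul_of_nonneg_right _ (norm_nonneg _)
          simpa [Real.norm_eq_abs] using abs_mink_le (G s) (x - y)
      _ = (4 * ‖G s‖ * ‖F s‖) * ‖x - y‖ := by ring
      _ ≤ M * ‖x - y‖ :=
          mul_le_mul_of_nonneg_right (hbound s hs) (norm_nonneg _)
  have hpl : IsPicardLindelof (fun t x => mink (G t) x • F t) (tmin := a) (tmax := b)
      ⟨t₀, ht₀⟩ x₀ (‖x₀‖₊ + 1) 0 (M * (2 * ‖x₀‖ + 1)).toNNReal M.toNNReal := by
    constructor
    · intro t ht
      apply LipschitzOnWith.of_dist_le_mul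
      intro x _ y _
      rw [dist_eq_norm, dist_eq_norm, Real.coe_toNNReal _ hM]
      exact hkey t ht x y
    · intro x _
      exact (continuousOn_mink (hG.mono hab) continuousOn_const).smul (hF.mono hab)
    · intro t ht x hx
      have hxn : ‖x‖ ≤ 2 * ‖x₀‖ + 1 := by
        have := mem_closedBall_iff_norm.mp hx
        push_cast at this
        have h2 := norm_sub_norm_le x x₀
        linarith
      rw [norm_smul, Real.coe_toNNReal _ (by positivity)]
      calc ‖mink (G t) x‖ * ‖F t‖ ≤ (4 * ‖G t‖ * ‖x‖) * ‖F t‖ := by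
            apply mul_le_mul_of_nonneg_right _ (norm_nonneg _)
            simpa [Real.norm_eq_abs] using abs_mink_le (G t) x
        _ = (4 * ‖G t‖ * ‖F t‖) * ‖x‖ := by ring
        _ ≤ M * (2 * ‖x₀‖ + 1) := by
            apply mul_le_mul (hbound t ht) hxn (norm_nonneg _) hM
    · have hmax : max (b - t₀) (t₀ - a) ≤ b - a := by
        apply max_le <;> [linarith [ht₀.1]; linarith [ht₀.2]]
      have h1 : M * (2 * ‖x₀‖ + 1) * max (b - t₀) (t₀ - a) ≤ M * (2 * ‖x₀‖ + 1) * (b - a) := by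
        apply mul_le_mul_of_nonneg_left hmax (by positivity)
      have h2 : M * (2 * ‖x₀‖ + 1) * (b - a) ≤ ‖x₀‖ + 1 := by
        nlinarith [norm_nonneg x₀, mul_nonneg hM (sub_nonneg.mpr hablr)]
      rw [Real.coe_toNNReal _ (by positivity)]
      push_cast
      simp only [sub_zero]
      linarith
  obtain ⟨z, hz0, hz⟩ := hpl.exists_eq_forall_mem_Icc_hasDerivWithinAt₀
  exact ⟨z, hz0, hz⟩

/-- Glue two solutions matching at `c`. -/
lemma glue_sol {v : ℝ → (Fin 4 → ℝ) → (Fin 4 → ℝ)} {a c b : ℝ} (hac : a ≤ c) (hcb : c ≤ b)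
    {z₁ z₂ : ℝ → Fin 4 → ℝ}
    (h₁ : ∀ s ∈ Icc a c, HasDerivWithinAt z₁ (v s (z₁ s)) (Icc a c) s)
    (h₂ : ∀ s ∈ Icc c b, HasDerivWithinAt z₂ (v s (z₂ s)) (Icc c b) s)
    (hm : z₁ c = z₂ c) :
    ∃ z : ℝ → Fin 4 → ℝ, EqOn z z₁ (Icc a c) ∧ EqOn z z₂ (Icc c b) ∧
      ∀ s ∈ Icc a b, HasDerivWithinAt z (v s (z s)) (Icc a b) s := by
  classical
  set z : ℝ → Fin 4 → ℝ := fun s => if s ≤ c then z₁ s else z₂ s with hzdef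
  have he₁ : EqOn z z₁ (Icc a c) := fun s hs => by simp [hzdef, hs.2]
  have he₂ : EqOn z z₂ (Icc c b) := fun s hs => by
    rcases eq_or_lt_of_le hs.1 with h | h
    · simp [hzdef, ← h, hm]
    · simp [hzdef, not_le.mpr h]
  refine ⟨z, he₁, he₂, ?_⟩
  intro s hs
  rcases lt_trichotomy s c with h | h | h
  · have hs1 : s ∈ Icc a c := ⟨hs.1, h.le⟩
    have hd : HasDerivWithinAt z (v s (z s)) (Icc a c) s := by
      rw [he₁ hs1]
      exact ((h₁ s hs1).congr (fun y hy => he₁ hy) (he₁ hs1))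
    apply hd.mono_of_mem_nhdsWithin
    rw [mem_nhdsWithin]
    exact ⟨Iio c, isOpen_Iio, h, fun y hy => ⟨hy.2.1, hy.1.le⟩⟩
  · subst h
    have hs1 : s ∈ Icc a s := ⟨hs.1, le_rfl⟩
    have hs2 : s ∈ Icc s b := ⟨le_rfl, hs.2⟩
    have hd1 : HasDerivWithinAt z (v s (z s)) (Icc a s) s := by
      rw [he₁ hs1]
      exact ((h₁ s hs1).congr (fun y hy => he₁ hy) (he₁ hs1))
    have hd2 : HasDerivWithinAt z (v s (z s)) (Icc s b) s := by
      rw [he₂ hs2]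
      exact ((h₂ s hs2).congr (fun y hy => he₂ hy) (he₂ hs2))
    have := hd1.union hd2
    rwa [Icc_union_Icc_eq_Icc hs.1 hs.2] at this
  · have hs2 : s ∈ Icc c b := ⟨h.le, hs.2⟩
    have hd : HasDerivWithinAt z (v s (z s)) (Icc c b) s := by
      rw [he₂ hs2]
      exact ((h₂ s hs2).congr (fun y hy => he₂ hy) (he₂ hs2))
    apply hd.mono_of_mem_nhdsWithin
    rw [mem_nhdsWithin]
    exact ⟨Ioi c, isOpen_Ioi, h, fun y hy => ⟨hy.1.le, hy.2.2⟩⟩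

lemma exists_bound {F G : ℝ → Fin 4 → ℝ} {I : Set ℝ}
    (hF : ContinuousOn F I) (hG : ContinuousOn G I)
    {a b : ℝ} (hsub : Icc a b ⊆ I) :
    ∃ M, 0 ≤ M ∧ ∀ s ∈ Icc a b, 4 * ‖G s‖ * ‖F s‖ ≤ M := by
  have hcont : ContinuousOn (fun s => 4 * ‖G s‖ * ‖F s‖) (Icc a b) :=
    ((continuousOn_const.mul (hG.mono hsub).norm).mul (hF.mono hsub).norm)
  obtain ⟨C, hC⟩ := isCompact_Icc.exists_bound_of_continuousOn hcont
  refine ⟨max C 0, le_max_right _ _, fun s hs => ?_⟩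
  calc 4 * ‖G s‖ * ‖F s‖ ≤ ‖4 * ‖G s‖ * ‖F s‖‖ := le_abs_self _
    _ ≤ C := hC s hs
    _ ≤ max C 0 := le_max_left _ _

lemma chain_right {F G : ℝ → Fin 4 → ℝ} {I : Set ℝ}
    (hF : ContinuousOn F I) (hG : ContinuousOn G I)
    {a b : ℝ} (hab : a ≤ b) (hsub : Icc a b ⊆ I) (x₀ : Fin 4 → ℝ) :
    ∃ z : ℝ → Fin 4 → ℝ, z a = x₀ ∧ ∀ s ∈ Icc a b,
      HasDerivWithinAt z (mink (G s) (z s) • F s) (Icc a b) s := by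
  obtain ⟨M, hM0, hbound⟩ := exists_bound hF hG hsub
  set τ : ℝ := 1 / (2 * (M + 1)) with hτdef
  have hτ : 0 < τ := by rw [hτdef]; positivity
  have key : ∀ k : ℕ, ∃ z : ℝ → Fin 4 → ℝ, z a = x₀ ∧
      ∀ s ∈ Icc a (min b (a + k * τ)),
        HasDerivWithinAt z (mink (G s) (z s) • F s) (Icc a (min b (a + k * τ))) s := by
    intro k
    induction k with
    | zero =>
      have he : min b (a + (0:ℕ) * τ) = a := by
        simp [min_eq_right hab]
      rw [he]
      refine ⟨fun _ => x₀, rfl, fun s hs => ?_⟩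
      have : s = a := le_antisymm hs.2 hs.1
      subst this
      rw [Icc_self]
      exact hasDerivWithinAt_singleton' _ _ _
    | succ k ih =>
      obtain ⟨zk, hzk0, hzk⟩ := ih
      set c : ℝ := min b (a + k * τ) with hcdef
      have hac : a ≤ c := le_min hab (by nlinarith [hτ.le, Nat.cast_nonneg (α := ℝ) k])
      have hcb : c ≤ b := min_le_left _ _
      by_cases hbc : b ≤ c
      · have e1 : c = b := le_antisymm hcb hbc
        have hbk : b ≤ a + k * τ := hbc.trans (min_le_right _ _)
        have e2 : min b (a + (k+1 : ℕ) * τ) = b := by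
          apply min_eq_left
          push_cast
          nlinarith [hτ.le]
        rw [e2]
        rw [e1] at hzk
        exact ⟨zk, hzk0, hzk⟩
      · push_neg at hbc
        have hceq : c = a + k * τ := by
          rcases min_choice b (a + k * τ) with h | h
          · rw [← hcdef] at h
            rw [h] at hbc
            exact absurd hbc (lt_irrefl b)
          · rw [← hcdef] at h; exact h
        set c' : ℝ := min b (c + τ) with hc'def
        have hcc' : c ≤ c' := le_min hcb (by linarith)
        have hc'b : c' ≤ b := min_le_left _ _
        have hsub' : Icc c c' ⊆ I := (Icc_subset_Icc hac hc'b).trans hsub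
        have hstep : (c' - c) * (M + 1) ≤ 1 / 2 := by
          have h1 : c' ≤ c + τ := min_le_right _ _
          have h2 : (c' - c) ≤ τ := by linarith
          have : τ * (M + 1) = 1 / 2 := by
            rw [hτdef]; field_simp
          nlinarith
        obtain ⟨w, hw0, hw⟩ := pl_step hF hG hM0 hsub' ⟨le_rfl, hcc'⟩
          (fun s hs => hbound s ⟨hac.trans hs.1, hs.2.trans hc'b⟩) hstep (zk c)
        obtain ⟨z, hz1, _, hz⟩ := glue_sol (v := fun s y => mink (G s) y • F s)
          hac hcc' hzk hw hw0.symm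
        have e3 : min b (a + (k+1 : ℕ) * τ) = c' := by
          rw [hc'def, hceq]
          congr 1
          push_cast
          ring
        rw [e3]
        refine ⟨z, ?_, hz⟩
        rw [hz1 ⟨le_rfl, hac⟩, hzk0]
  obtain ⟨k, hk⟩ := exists_nat_ge ((b - a) / τ)
  have hbk : min b (a + k * τ) = b := by
    apply min_eq_left
    have : b - a ≤ k * τ := by
      rw [div_le_iff₀ hτ] at hk
      linarith
    linarith
  obtain ⟨z, hz0, hz⟩ := key k
  rw [hbk] at hz
  exact ⟨z, hz0, hz⟩

lemma chain_left {F G : ℝ → Fin 4 → ℝ} {I : Set ℝ}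
    (hF : ContinuousOn F I) (hG : ContinuousOn G I)
    {a b : ℝ} (hab : a ≤ b) (hsub : Icc a b ⊆ I) (x₀ : Fin 4 → ℝ) :
    ∃ z : ℝ → Fin 4 → ℝ, z b = x₀ ∧ ∀ s ∈ Icc a b,
      HasDerivWithinAt z (mink (G s) (z s) • F s) (Icc a b) s := by
  obtain ⟨M, hM0, hbound⟩ := exists_bound hF hG hsub
  set τ : ℝ := 1 / (2 * (M + 1)) with hτdef
  have hτ : 0 < τ := by rw [hτdef]; positivity
  have key : ∀ k : ℕ, ∃ z : ℝ → Fin 4 → ℝ, z b = x₀ ∧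
      ∀ s ∈ Icc (max a (b - k * τ)) b,
        HasDerivWithinAt z (mink (G s) (z s) • F s) (Icc (max a (b - k * τ)) b) s := by
    intro k
    induction k with
    | zero =>
      have he : max a (b - (0:ℕ) * τ) = b := by
        simp [max_eq_right hab]
      rw [he]
      refine ⟨fun _ => x₀, rfl, fun s hs => ?_⟩
      have : s = b := le_antisymm hs.2 hs.1
      subst this
      rw [Icc_self]
      exact hasDerivWithinAt_singleton' _ _ _
    | succ k ih =>
      obtain ⟨zk, hzk0, hzk⟩ := ih
      set c : ℝ := max a (b - k * τ) with hcdef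
      have hcb : c ≤ b := max_le hab (by nlinarith [hτ.le, Nat.cast_nonneg (α := ℝ) k])
      have hac : a ≤ c := le_max_left _ _
      by_cases hca : c ≤ a
      · have e1 : c = a := le_antisymm hca hac
        have hak : b - k * τ ≤ a := hca.trans' (le_max_right _ _)
        have e2 : max a (b - (k+1 : ℕ) * τ) = a := by
          apply max_eq_left
          push_cast
          nlinarith [hτ.le]
        rw [e2]
        rw [e1] at hzk
        exact ⟨zk, hzk0, hzk⟩
      · push_neg at hca
        have hceq : c = b - k * τ := by
          rcases max_choice a (b - k * τ) with h | h
          · rw [← hcdef] at h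
            rw [h] at hca
            exact absurd hca (lt_irrefl a)
          · rw [← hcdef] at h; exact h
        set c' : ℝ := max a (c - τ) with hc'def
        have hc'c : c' ≤ c := max_le hca.le (by linarith)
        have hac' : a ≤ c' := le_max_left _ _
        have hsub' : Icc c' c ⊆ I := (Icc_subset_Icc hac' hcb).trans hsub
        have hstep : (c - c') * (M + 1) ≤ 1 / 2 := by
          have h1 : c - τ ≤ c' := le_max_right _ _
          have h2 : c - c' ≤ τ := by linarith
          have : τ * (M + 1) = 1 / 2 := by
            rw [hτdef]; field_simp
          nlinarith
        obtain ⟨w, hw0, hw⟩ := pl_step hF hG hM0 hsub' ⟨hc'c, le_rfl⟩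
          (fun s hs => hbound s ⟨hac'.trans hs.1, hs.2.trans hcb⟩) hstep (zk c)
        obtain ⟨z, _, hz2, hz⟩ := glue_sol (v := fun s y => mink (G s) y • F s)
          hc'c hcb hw hzk hw0
        have e3 : max a (b - (k+1 : ℕ) * τ) = c' := by
          rw [hc'def, hceq]
          congr 1
          push_cast
          ring
        rw [e3]
        refine ⟨z, ?_, hz⟩
        rw [hz2 ⟨hcb, le_rfl⟩, hzk0]
  obtain ⟨k, hk⟩ := exists_nat_ge ((b - a) / τ)
  have hbk : max a (b - k * τ) = a := by
    apply max_eq_left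
    have : b - a ≤ k * τ := by
      rw [div_le_iff₀ hτ] at hk
      linarith
    linarith
  obtain ⟨z, hz0, hz⟩ := key k
  rw [hbk] at hz
  exact ⟨z, hz0, hz⟩

/-- Existence of a solution on a compact subinterval, with initial condition anywhere inside. -/
lemma exist_compact {F G : ℝ → Fin 4 → ℝ} {I : Set ℝ}
    (hF : ContinuousOn F I) (hG : ContinuousOn G I)
    {a b t₀ : ℝ} (ht₀ : t₀ ∈ Icc a b) (hsub : Icc a b ⊆ I) (x₀ : Fin 4 → ℝ) :
    ∃ z : ℝ → Fin 4 → ℝ, z t₀ = x₀ ∧ ∀ s ∈ Icc a b,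
      HasDerivWithinAt z (mink (G s) (z s) • F s) (Icc a b) s := by
  obtain ⟨z₁, hz₁0, hz₁⟩ := chain_left hF hG ht₀.1 ((Icc_subset_Icc_right ht₀.2).trans hsub) x₀
  obtain ⟨z₂, hz₂0, hz₂⟩ := chain_right hF hG ht₀.2 ((Icc_subset_Icc_left ht₀.1).trans hsub) x₀
  obtain ⟨z, hzl, _, hz⟩ := glue_sol (v := fun s y => mink (G s) y • F s)
    ht₀.1 ht₀.2 hz₁ hz₂ (by rw [hz₁0, hz₂0])
  refine ⟨z, ?_, hz⟩
  rw [hzl ⟨ht₀.1, le_rfl⟩, hz₁0]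

/-- Uniqueness of solutions on a compact interval. -/
lemma uniq_sol {F G : ℝ → Fin 4 → ℝ} {I : Set ℝ}
    (hF : ContinuousOn F I) (hG : ContinuousOn G I)
    {a b t₀ : ℝ} (ht₀ : t₀ ∈ Icc a b) (hsub : Icc a b ⊆ I)
    {f g : ℝ → Fin 4 → ℝ}
    (hf : ∀ s ∈ Icc a b, HasDerivWithinAt f (mink (G s) (f s) • F s) (Icc a b) s)
    (hg : ∀ s ∈ Icc a b, HasDerivWithinAt g (mink (G s) (g s) • F s) (Icc a b) s)
    (h0 : f t₀ = g t₀) : EqOn f g (Icc a b) := by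
  obtain ⟨M, hM0, hbound⟩ := exists_bound hF hG hsub
  set u : ℝ → ℝ := fun t => max a (min t b) with hudef
  have hu_mem : ∀ t, u t ∈ Icc a b := fun t =>
    ⟨le_max_left _ _, max_le (ht₀.1.trans ht₀.2) (min_le_right _ _)⟩
  have hu_eq : ∀ t ∈ Icc a b, u t = t := fun t ht => by
    rw [hudef]; simp only
    rw [min_eq_left ht.2, max_eq_right ht.1]
  set v' : ℝ → (Fin 4 → ℝ) → (Fin 4 → ℝ) := fun t y => mink (G (u t)) y • F (u t) with hv'def
  have hlip : ∀ t, LipschitzOnWith M.toNNReal (v' t) univ := by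
    intro t
    apply LipschitzOnWith.of_dist_le_mul
    intro x _ y _
    rw [dist_eq_norm, dist_eq_norm, Real.coe_toNNReal _ hM0]
    rw [hv'def]
    simp only
    rw [← sub_smul, ← mink_sub_right, norm_smul]
    calc ‖mink (G (u t)) (x - y)‖ * ‖F (u t)‖
        ≤ (4 * ‖G (u t)‖ * ‖x - y‖) * ‖F (u t)‖ := by
          apply mul_le_mul_of_nonneg_right _ (norm_nonneg _)
          simpa [Real.norm_eq_abs] using abs_mink_le (G (u t)) (x - y)
      _ = (4 * ‖G (u t)‖ * ‖F (u t)‖) * ‖x - y‖ := by ring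
      _ ≤ M * ‖x - y‖ :=
          mul_le_mul_of_nonneg_right (hbound _ (hu_mem t)) (norm_nonneg _)
  have hcf : ContinuousOn f (Icc a b) := fun s hs => ((hf s hs).continuousWithinAt)
  have hcg : ContinuousOn g (Icc a b) := fun s hs => ((hg s hs).continuousWithinAt)
  -- convert derivatives to the clamped field
  have hf' : ∀ s ∈ Icc a b, HasDerivWithinAt f (v' s (f s)) (Icc a b) s := fun s hs => by
    rw [hv'def]; simp only [hu_eq s hs]; exact hf s hs
  have hg' : ∀ s ∈ Icc a b, HasDerivWithinAt g (v' s (g s)) (Icc a b) s := fun s hs => by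
    rw [hv'def]; simp only [hu_eq s hs]; exact hg s hs
  intro t ht
  rcases le_or_gt t₀ t with hle | hlt
  · -- use right uniqueness on [t₀, b]
    have hsub2 : Icc t₀ b ⊆ Icc a b := Icc_subset_Icc_left ht₀.1
    have key := ODE_solution_unique_of_mem_Icc_right (v := v') (s := fun _ => univ)
      (fun t _ => hlip t) (hcf.mono hsub2)
      (fun r hr => by
        have hr' : r ∈ Icc a b := ⟨ht₀.1.trans hr.1, hr.2.le⟩
        apply (hf' r hr').mono_of_mem_nhdsWithin
        rw [mem_nhdsWithin]
        exact ⟨Ioo (a - 1) b, isOpen_Ioo, ⟨by linarith [hr'.1], hr.2⟩,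
          fun y hy => ⟨hr'.1.trans hy.2, hy.1.2.le⟩⟩)
      (fun _ _ => mem_univ _) (hcg.mono hsub2)
      (fun r hr => by
        have hr' : r ∈ Icc a b := ⟨ht₀.1.trans hr.1, hr.2.le⟩
        apply (hg' r hr').mono_of_mem_nhdsWithin
        rw [mem_nhdsWithin]
        exact ⟨Ioo (a - 1) b, isOpen_Ioo, ⟨by linarith [hr'.1], hr.2⟩,
          fun y hy => ⟨hr'.1.trans hy.2, hy.1.2.le⟩⟩)
      (fun _ _ => mem_univ _) h0
    exact key ⟨hle, ht.2⟩
  · -- use left uniqueness on [a, t₀]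
    have hsub2 : Icc a t₀ ⊆ Icc a b := Icc_subset_Icc_right ht₀.2
    have key := ODE_solution_unique_of_mem_Icc_left (v := v') (s := fun _ => univ)
      (fun t _ => hlip t) (hcf.mono hsub2)
      (fun r hr => by
        have hr' : r ∈ Icc a b := ⟨hr.1.le, hr.2.trans ht₀.2⟩
        apply (hf' r hr').mono_of_mem_nhdsWithin
        rw [mem_nhdsWithin]
        exact ⟨Ioo a (b + 1), isOpen_Ioo, ⟨hr.1, by linarith [hr'.2]⟩,
          fun y hy => ⟨hy.1.1.le, hy.2.trans hr'.2⟩⟩)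
      (fun _ _ => mem_univ _) (hcg.mono hsub2)
      (fun r hr => by
        have hr' : r ∈ Icc a b := ⟨hr.1.le, hr.2.trans ht₀.2⟩
        apply (hg' r hr').mono_of_mem_nhdsWithin
        rw [mem_nhdsWithin]
        exact ⟨Ioo a (b + 1), isOpen_Ioo, ⟨hr.1, by linarith [hr'.2]⟩,
          fun y hy => ⟨hy.1.1.le, hy.2.trans hr'.2⟩⟩)
      (fun _ _ => mem_univ _) h0
    exact key ⟨ht.1, hlt.le⟩

/-- Global existence on an open order-connected set. -/
lemma global_exist {F G : ℝ → Fin 4 → ℝ} {I : Set ℝ}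
    (hIo : IsOpen I) (hIc : I.OrdConnected)
    (hF : ContinuousOn F I) (hG : ContinuousOn G I)
    {s₀ : ℝ} (hs₀ : s₀ ∈ I) (x₀ : Fin 4 → ℝ) :
    ∃ z : ℝ → Fin 4 → ℝ, z s₀ = x₀ ∧ ∀ s ∈ I,
      HasDerivAt z (mink (G s) (z s) • F s) s := by
  classical
  have hIccI : ∀ x ∈ I, ∀ y ∈ I, Icc x y ⊆ I := fun x hx y hy => hIc.out hx hy
  have hminI : ∀ x ∈ I, ∀ y ∈ I, min x y ∈ I := fun x hx y hy => by
    rcases min_choice x y with h | h <;> rw [h] <;> assumption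
  have hmaxI : ∀ x ∈ I, ∀ y ∈ I, max x y ∈ I := fun x hx y hy => by
    rcases max_choice x y with h | h <;> rw [h] <;> assumption
  have exA : ∀ s ∈ I, ∃ z : ℝ → Fin 4 → ℝ, z s₀ = x₀ ∧
      ∀ r ∈ Icc (min s s₀) (max s s₀),
        HasDerivWithinAt z (mink (G r) (z r) • F r) (Icc (min s s₀) (max s s₀)) r := by
    intro s hs
    exact exist_compact hF hG ⟨min_le_right _ _, le_max_right _ _⟩
      (hIccI _ (hminI s hs s₀ hs₀) _ (hmaxI s hs s₀ hs₀)) x₀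
  set z : ℝ → Fin 4 → ℝ := fun s => if h : s ∈ I then (exA s h).choose s else x₀ with hzdef
  have hz0 : z s₀ = x₀ := by
    rw [hzdef]
    simp only [dif_pos hs₀]
    exact (exA s₀ hs₀).choose_spec.1
  refine ⟨z, hz0, ?_⟩
  intro s hs
  obtain ⟨ε, hε, hball⟩ := Metric.isOpen_iff.mp hIo s hs
  set c : ℝ := s - ε / 2 with hcdef
  set d : ℝ := s + ε / 2 with hddef
  have hcd : Icc c d ⊆ I := by
    intro y hy
    apply hball
    rw [Metric.mem_ball, Real.dist_eq, abs_lt]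
    constructor
    · have := hy.1; rw [hcdef] at this; linarith
    · have := hy.2; rw [hddef] at this; linarith
  have hcdle : c ≤ d := by rw [hcdef, hddef]; linarith
  have hcI : c ∈ I := hcd ⟨le_rfl, hcdle⟩
  have hdI : d ∈ I := hcd ⟨hcdle, le_rfl⟩
  set α : ℝ := min c s₀ with hαdef
  set β : ℝ := max d s₀ with hβdef
  have hαβ : Icc α β ⊆ I := hIccI _ (hminI c hcI s₀ hs₀) _ (hmaxI d hdI s₀ hs₀)
  have hs₀αβ : s₀ ∈ Icc α β := ⟨min_le_right _ _, le_max_right _ _⟩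
  obtain ⟨w, hw0, hw⟩ := exist_compact hF hG hs₀αβ hαβ x₀
  -- z agrees with w on Icc α β
  have hEq : ∀ t ∈ Icc α β, z t = w t := by
    intro t ht
    have htI : t ∈ I := hαβ ht
    have hsubt : Icc (min t s₀) (max t s₀) ⊆ Icc α β := by
      apply Icc_subset_Icc
      · exact le_min ht.1 hs₀αβ.1
      · exact max_le ht.2 hs₀αβ.2
    have ht' : t ∈ Icc (min t s₀) (max t s₀) := ⟨min_le_left _ _, le_max_left _ _⟩
    have hs₀' : s₀ ∈ Icc (min t s₀) (max t s₀) := ⟨min_le_right _ _, le_max_right _ _⟩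
    have huniq := uniq_sol hF hG hs₀' ((hsubt).trans hαβ)
      (exA t htI).choose_spec.2
      (fun r hr => (hw r (hsubt hr)).mono hsubt)
      (by rw [(exA t htI).choose_spec.1, hw0])
    have := huniq ht'
    rw [hzdef]
    simp only [dif_pos htI]
    exact this
  -- conclude
  have hKnhds : Icc α β ∈ nhds s := by
    apply Filter.mem_of_superset (Icc_mem_nhds (show c < s by rw [hcdef]; linarith)
      (show s < d by rw [hddef]; linarith))
    exact Icc_subset_Icc (min_le_left _ _) (le_max_left _ _)
  have hsαβ : s ∈ Icc α β :=
    ⟨(min_le_left c s₀).trans (by rw [hcdef]; linarith), (le_max_left d s₀).trans' (by rw [hddef]; linarith)⟩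
  have hwAt : HasDerivAt w (mink (G s) (w s) • F s) s :=
    (hw s hsαβ).hasDerivAt hKnhds
  have heq' : z =ᶠ[nhds s] w := Filter.eventuallyEq_of_mem hKnhds hEq
  have := hwAt.congr_of_eventuallyEq heq'
  rwa [← hEq s hsαβ] at this

lemma contDiffOn_deriv_top {I : Set ℝ} (hIo : IsOpen I) {f : ℝ → Fin 4 → ℝ}
    (hf : ContDiffOn ℝ (⊤ : ℕ∞) f I) : ContDiffOn ℝ (⊤ : ℕ∞) (deriv f) I := by
  exact ((contDiffOn_infty_iff_deriv_of_isOpen hIo).mp hf).2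

/-- Bootstrap: a solution of the smooth linear ODE is smooth. -/
lemma smooth_sol {I : Set ℝ} (hIo : IsOpen I) {F G z : ℝ → Fin 4 → ℝ}
    (hF : ContDiffOn ℝ (⊤ : ℕ∞) F I) (hG : ContDiffOn ℝ (⊤ : ℕ∞) G I)
    (hz : ∀ s ∈ I, HasDerivAt z (mink (G s) (z s) • F s) s) :
    ContDiffOn ℝ (⊤ : ℕ∞) z I := by
  have hdiff : DifferentiableOn ℝ z I := fun s hs =>
    ((hz s hs).differentiableAt).differentiableWithinAt
  have hderiv : ∀ s ∈ I, deriv z s = mink (G s) (z s) • F s := fun s hs => (hz s hs).deriv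
  have key : ∀ n : ℕ, ContDiffOn ℝ n z I := by
    intro n
    induction n with
    | zero =>
      rw [show ((0:ℕ) : WithTop ℕ∞) = 0 from rfl, contDiffOn_zero]
      exact hdiff.continuousOn
    | succ n ih =>
      have : ((n + 1 : ℕ) : WithTop ℕ∞) = (n : WithTop ℕ∞) + 1 := by push_cast; rfl
      rw [this, contDiffOn_succ_iff_deriv_of_isOpen hIo]
      refine ⟨hdiff, ?_, ?_⟩
      · intro h
        exact absurd h (by exact_mod_cast WithTop.natCast_ne_top n)
      · apply ContDiffOn.congr _ (fun s hs => hderiv s hs)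
        exact (contDiffOn_mink (hG.of_le (by exact_mod_cast le_top))
          ih).smul (hF.of_le (by exact_mod_cast le_top))
  intro s hs
  apply contDiffWithinAt_infty.mpr
  intro n
  exact key n s hs

lemma const_of_hasDerivAt_zero {I : Set ℝ} (hIo : IsOpen I) (hIc : I.OrdConnected)
    {h : ℝ → ℝ} (hd : ∀ s ∈ I, HasDerivAt h 0 s) {x y : ℝ} (hx : x ∈ I) (hy : y ∈ I) :
    h x = h y := by
  have hconv : Convex ℝ I := convex_iff_ordConnected.mpr hIc
  apply hconv.is_const_of_fderivWithin_eq_zero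
    (fun s hs => ((hd s hs).differentiableAt).differentiableWithinAt) _ hx hy
  intro s hs
  rw [fderivWithin_of_isOpen hIo hs]
  have h1 : HasFDerivAt h (ContinuousLinearMap.smulRight (1 : ℝ →L[ℝ] ℝ) (0:ℝ)) s := hd s hs
  rw [h1.fderiv]
  ext v
  simp

/-- Expansion of a vector in a Minkowski-orthonormal basis. -/
lemma mink_expand {T D U V : Fin 4 → ℝ}
    (hTT : mink T T = -1) (hDD : mink D D = 1) (hUU : mink U U = 1) (hVV : mink V V = 1)
    (hTD : mink T D = 0) (hTU : mink T U = 0) (hTV : mink T V = 0)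
    (hDU : mink D U = 0) (hDV : mink D V = 0) (hUV : mink U V = 0)
    (W : Fin 4 → ℝ) :
    W = (-(mink W T)) • T + mink W D • D + mink W U • U + mink W V • V := by
  classical
  set v : Fin 4 → (Fin 4 → ℝ) := ![T, D, U, V] with hv
  have hli : LinearIndependent ℝ v := by
    rw [Fintype.linearIndependent_iff]
    intro g hg
    have expand : g 0 • T + g 1 • D + g 2 • U + g 3 • V = 0 := by
      rw [← hg, hv, Fin.sum_univ_four]
      simp
    have e0 := congrArg (fun x => mink x T) expand
    have e1 := congrArg (fun x => mink x D) expand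
    have e2 := congrArg (fun x => mink x U) expand
    have e3 := congrArg (fun x => mink x V) expand
    simp only [mink_add_left, mink_smul_left, mink_zero_left] at e0 e1 e2 e3
    have hDT : mink D T = 0 := by rw [mink_comm]; exact hTD
    have hUT : mink U T = 0 := by rw [mink_comm]; exact hTU
    have hVT : mink V T = 0 := by rw [mink_comm]; exact hTV
    have hUD : mink U D = 0 := by rw [mink_comm]; exact hDU
    have hVD : mink V D = 0 := by rw [mink_comm]; exact hDV
    have hVU : mink V U = 0 := by rw [mink_comm]; exact hUV
    rw [hTT, hDT, hUT, hVT] at e0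
    rw [hTD, hDD, hUD, hVD] at e1
    rw [hTU, hDU, hUU, hVU] at e2
    rw [hTV, hDV, hUV, hVV] at e3
    have h0 : g 0 = 0 := by linarith
    have h1 : g 1 = 0 := by linarith
    have h2 : g 2 = 0 := by linarith
    have h3 : g 3 = 0 := by linarith
    intro i
    fin_cases i
    · exact h0
    · exact h1
    · exact h2
    · exact h3
  have hsp : Submodule.span ℝ (Set.range v) = ⊤ :=
    hli.span_eq_top_of_card_eq_finrank (by simp [Module.finrank_fin_fun])
  set W' : Fin 4 → ℝ :=
    W - ((-(mink W T)) • T + mink W D • D + mink W U • U + mink W V • V) with hW'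
  have hDT : mink D T = 0 := by rw [mink_comm]; exact hTD
  have hUT : mink U T = 0 := by rw [mink_comm]; exact hTU
  have hVT : mink V T = 0 := by rw [mink_comm]; exact hTV
  have hUD : mink U D = 0 := by rw [mink_comm]; exact hDU
  have hVD : mink V D = 0 := by rw [mink_comm]; exact hDV
  have hVU : mink V U = 0 := by rw [mink_comm]; exact hUV
  have hφT : mink W' T = 0 := by
    rw [hW', mink_sub_left, mink_add_left, mink_add_left, mink_add_left,
      mink_smul_left, mink_smul_left, mink_smul_left, mink_smul_left,
      hTT, hDT, hUT, hVT]
    ring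
  have hφD : mink W' D = 0 := by
    rw [hW', mink_sub_left, mink_add_left, mink_add_left, mink_add_left,
      mink_smul_left, mink_smul_left, mink_smul_left, mink_smul_left,
      hTD, hDD, hUD, hVD]
    ring
  have hφU : mink W' U = 0 := by
    rw [hW', mink_sub_left, mink_add_left, mink_add_left, mink_add_left,
      mink_smul_left, mink_smul_left, mink_smul_left, mink_smul_left,
      hTU, hDU, hUU, hVU]
    ring
  have hφV : mink W' V = 0 := by
    rw [hW', mink_sub_left, mink_add_left, mink_add_left, mink_add_left,
      mink_smul_left, mink_smul_left, mink_smul_left, mink_smul_left,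
      hTV, hDV, hUV, hVV]
    ring
  set φ : (Fin 4 → ℝ) →ₗ[ℝ] ℝ :=
    { toFun := fun y => mink W' y,
      map_add' := fun p q => mink_add_right _ _ _,
      map_smul' := fun c p => by simpa [smul_eq_mul] using mink_smul_right c W' p } with hφdef
  have hφ0 : φ = 0 := by
    apply LinearMap.ext_on hsp
    rintro x ⟨i, rfl⟩
    fin_cases i
    · simpa [hφdef, hv] using hφT
    · simpa [hφdef, hv] using hφD
    · simpa [hφdef, hv] using hφU
    · simpa [hφdef, hv] using hφV
  have hφx : ∀ x, mink W' x = 0 := fun x => by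
    have := LinearMap.congr_fun hφ0 x
    simpa [hφdef] using this
  have hW'0 : W' = 0 := by
    funext i
    fin_cases i
    · have := hφx (Pi.single 0 1)
      simp only [mink, Pi.single_apply] at this
      norm_num at this
      simpa using this
    · have := hφx (Pi.single 1 1)
      simp only [mink, Pi.single_apply] at this
      norm_num at this
      simpa using this
    · have := hφx (Pi.single 2 1)
      simp only [mink, Pi.single_apply] at this
      norm_num at this
      simpa using this
    · have := hφx (Pi.single 3 1)
      simp only [mink, Pi.single_apply] at this
      norm_num at this
      simpa using this
  rw [hW'] at hW'0
  exact sub_eq_zero.mp hW'0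

end LorentzAux

open LorentzAux

/-- a time-like curve parametrized by proper time admits a generalized
Bishop frame of type D iff there is a smooth unit space-like normal field `D₁` and a
smooth function `d₁` with `T' = d₁ D₁`. -/
theorem stmt_9 (I : Set ℝ) (hIopen : IsOpen I) (hIconn : I.OrdConnected)
    (γ : ℝ → Fin 4 → ℝ) (hγ : ProperTime I γ) :
    AdmitsD I γ ↔
      ∃ (D₁ : ℝ → Fin 4 → ℝ) (d₁ : ℝ → ℝ),
        ContDiffOn ℝ (⊤ : ℕ∞) D₁ I ∧ ContDiffOn ℝ (⊤ : ℕ∞) d₁ I ∧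
        ∀ s ∈ I,
          mink (D₁ s) (D₁ s) = 1 ∧ mink (deriv γ s) (D₁ s) = 0 ∧
          deriv (deriv γ) s = d₁ s • D₁ s := by
  obtain ⟨hγs, hγn⟩ := hγ
  constructor
  · rintro ⟨Z₁, Z₂, Z₃, x₁, x₂, x₃, ⟨hZ₁s, hZ₂s, hZ₃s, horth⟩, ⟨hx₁s, hx₂s, hx₃s⟩, heqs⟩
    exact ⟨Z₁, x₁, hZ₁s, hx₁s, fun s hs =>
      ⟨(horth s hs).1, (horth s hs).2.2.2.2.2.2.1, (heqs s hs).1⟩⟩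
  · rintro ⟨D₁, d₁, hD₁s, hd₁s, hprop⟩
    rcases Set.eq_empty_or_nonempty I with hIe | ⟨s₀, hs₀⟩
    · subst hIe
      refine ⟨fun _ => 0, fun _ => 0, fun _ => 0, fun _ => 0, fun _ => 0, fun _ => 0,
        ⟨?_, ?_, ?_, ?_⟩, ⟨?_, ?_, ?_⟩, ?_⟩ <;>
        first
          | exact fun x hx => absurd hx (notMem_empty x)
          | exact fun x hx => absurd hx (notMem_empty x)
    · -- main construction
      have hinf1 : ((⊤ : ℕ∞) : WithTop ℕ∞) ≠ 0 := by simp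
      -- tangent
      have hTsm : ContDiffOn ℝ (⊤ : ℕ∞) (deriv γ) I := contDiffOn_deriv_top hIopen hγs
      have hThas : ∀ s ∈ I, HasDerivAt (deriv γ) (d₁ s • D₁ s) s := by
        intro s hs
        have hd : DifferentiableAt ℝ (deriv γ) s :=
          ((hTsm.differentiableOn hinf1) s hs).differentiableAt (hIopen.mem_nhds hs)
        have := hd.hasDerivAt
        rwa [(hprop s hs).2.2] at this
      have hD₁has : ∀ s ∈ I, HasDerivAt D₁ (deriv D₁ s) s := by
        intro s hs
        exact (((hD₁s.differentiableOn hinf1) s hs).differentiableAt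
          (hIopen.mem_nhds hs)).hasDerivAt
      -- derivative identities of the data
      have hTDd : ∀ s ∈ I, mink (deriv γ s) (deriv D₁ s) = -(d₁ s) := by
        intro s hs
        have h1 := hasDerivAt_mink (hThas s hs) (hD₁has s hs)
        have h2 : (fun t => mink (deriv γ t) (D₁ t)) =ᶠ[nhds s] (fun _ => (0:ℝ)) := by
          filter_upwards [hIopen.mem_nhds hs] with t ht
          exact (hprop t ht).2.1
        have h3 := (h1.congr_of_eventuallyEq h2.symm).unique (hasDerivAt_const s 0)
        rw [mink_smul_left, (hprop s hs).1] at h3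
        linarith
      have hDDd : ∀ s ∈ I, mink (deriv D₁ s) (D₁ s) = 0 := by
        intro s hs
        have h1 := hasDerivAt_mink (hD₁has s hs) (hD₁has s hs)
        have h2 : (fun t => mink (D₁ t) (D₁ t)) =ᶠ[nhds s] (fun _ => (1:ℝ)) := by
          filter_upwards [hIopen.mem_nhds hs] with t ht
          exact (hprop t ht).1
        have h3 := (h1.congr_of_eventuallyEq h2.symm).unique (hasDerivAt_const s 1)
        have h4 : mink (D₁ s) (deriv D₁ s) = mink (deriv D₁ s) (D₁ s) := mink_comm _ _
        linarith
      -- initial orthonormal completion at s₀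
      obtain ⟨u, v, huu, hvv, huv, hTu, hTv, hDu, hDv⟩ :=
        complete_frame (hγn s₀ hs₀) ((hprop s₀ hs₀).1) ((hprop s₀ hs₀).2.1)
      -- the normal parallel transport ODE
      have hFsm : ContDiffOn ℝ (⊤ : ℕ∞) (fun s => -(D₁ s)) I := hD₁s.neg
      have hGsm : ContDiffOn ℝ (⊤ : ℕ∞) (deriv D₁) I := contDiffOn_deriv_top hIopen hD₁s
      have hFc : ContinuousOn (fun s => -(D₁ s)) I := hFsm.continuousOn
      have hGc : ContinuousOn (deriv D₁) I := hGsm.continuousOn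
      obtain ⟨Z₂, hZ₂0, hZ₂has⟩ := global_exist hIopen hIconn hFc hGc hs₀ u
      obtain ⟨Z₃, hZ₃0, hZ₃has⟩ := global_exist hIopen hIconn hFc hGc hs₀ v
      have hZ₂sm : ContDiffOn ℝ (⊤ : ℕ∞) Z₂ I := smooth_sol hIopen hFsm hGsm hZ₂has
      have hZ₃sm : ContDiffOn ℝ (⊤ : ℕ∞) Z₃ I := smooth_sol hIopen hFsm hGsm hZ₃has
      -- invariants
      have hg₁ : ∀ s ∈ I, mink (Z₂ s) (D₁ s) = 0 := by
        intro s hs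
        have hder : ∀ t ∈ I, HasDerivAt (fun r => mink (Z₂ r) (D₁ r)) 0 t := by
          intro t ht
          have h1 := hasDerivAt_mink (hZ₂has t ht) (hD₁has t ht)
          have e : mink (mink (deriv D₁ t) (Z₂ t) • -(D₁ t)) (D₁ t)
              + mink (Z₂ t) (deriv D₁ t) = 0 := by
            rw [mink_smul_left, mink_neg_left, (hprop t ht).1, mink_comm (Z₂ t) (deriv D₁ t)]
            ring
          rwa [e] at h1
        have := const_of_hasDerivAt_zero hIopen hIconn hder hs hs₀
        rwa [hZ₂0, mink_comm u (D₁ s₀), hDu] at this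
      have hg₂ : ∀ s ∈ I, mink (Z₃ s) (D₁ s) = 0 := by
        intro s hs
        have hder : ∀ t ∈ I, HasDerivAt (fun r => mink (Z₃ r) (D₁ r)) 0 t := by
          intro t ht
          have h1 := hasDerivAt_mink (hZ₃has t ht) (hD₁has t ht)
          have e : mink (mink (deriv D₁ t) (Z₃ t) • -(D₁ t)) (D₁ t)
              + mink (Z₃ t) (deriv D₁ t) = 0 := by
            rw [mink_smul_left, mink_neg_left, (hprop t ht).1, mink_comm (Z₃ t) (deriv D₁ t)]
            ring
          rwa [e] at h1
        have := const_of_hasDerivAt_zero hIopen hIconn hder hs hs₀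
        rwa [hZ₃0, mink_comm v (D₁ s₀), hDv] at this
      have hg₃ : ∀ s ∈ I, mink (Z₂ s) (deriv γ s) = 0 := by
        intro s hs
        have hder : ∀ t ∈ I, HasDerivAt (fun r => mink (Z₂ r) (deriv γ r)) 0 t := by
          intro t ht
          have h1 := hasDerivAt_mink (hZ₂has t ht) (hThas t ht)
          have e : mink (mink (deriv D₁ t) (Z₂ t) • -(D₁ t)) (deriv γ t)
              + mink (Z₂ t) (d₁ t • D₁ t) = 0 := by
            rw [mink_smul_left, mink_neg_left, mink_smul_right,
              mink_comm (D₁ t) (deriv γ t), (hprop t ht).2.1, hg₁ t ht]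
            ring
          rwa [e] at h1
        have := const_of_hasDerivAt_zero hIopen hIconn hder hs hs₀
        rwa [hZ₂0, mink_comm u (deriv γ s₀), hTu] at this
      have hg₄ : ∀ s ∈ I, mink (Z₃ s) (deriv γ s) = 0 := by
        intro s hs
        have hder : ∀ t ∈ I, HasDerivAt (fun r => mink (Z₃ r) (deriv γ r)) 0 t := by
          intro t ht
          have h1 := hasDerivAt_mink (hZ₃has t ht) (hThas t ht)
          have e : mink (mink (deriv D₁ t) (Z₃ t) • -(D₁ t)) (deriv γ t)
              + mink (Z₃ t) (d₁ t • D₁ t) = 0 := by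
            rw [mink_smul_left, mink_neg_left, mink_smul_right,
              mink_comm (D₁ t) (deriv γ t), (hprop t ht).2.1, hg₂ t ht]
            ring
          rwa [e] at h1
        have := const_of_hasDerivAt_zero hIopen hIconn hder hs hs₀
        rwa [hZ₃0, mink_comm v (deriv γ s₀), hTv] at this
      have hg₅ : ∀ s ∈ I, mink (Z₂ s) (Z₂ s) = 1 := by
        intro s hs
        have hder : ∀ t ∈ I, HasDerivAt (fun r => mink (Z₂ r) (Z₂ r)) 0 t := by
          intro t ht
          have h1 := hasDerivAt_mink (hZ₂has t ht) (hZ₂has t ht)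
          have e : mink (mink (deriv D₁ t) (Z₂ t) • -(D₁ t)) (Z₂ t)
              + mink (Z₂ t) (mink (deriv D₁ t) (Z₂ t) • -(D₁ t)) = 0 := by
            rw [mink_smul_left, mink_neg_left, mink_smul_right, mink_neg_right,
              mink_comm (D₁ t) (Z₂ t), hg₁ t ht]
            ring
          rwa [e] at h1
        have := const_of_hasDerivAt_zero hIopen hIconn hder hs hs₀
        rwa [hZ₂0, huu] at this
      have hg₆ : ∀ s ∈ I, mink (Z₃ s) (Z₃ s) = 1 := by
        intro s hs
        have hder : ∀ t ∈ I, HasDerivAt (fun r => mink (Z₃ r) (Z₃ r)) 0 t := by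
          intro t ht
          have h1 := hasDerivAt_mink (hZ₃has t ht) (hZ₃has t ht)
          have e : mink (mink (deriv D₁ t) (Z₃ t) • -(D₁ t)) (Z₃ t)
              + mink (Z₃ t) (mink (deriv D₁ t) (Z₃ t) • -(D₁ t)) = 0 := by
            rw [mink_smul_left, mink_neg_left, mink_smul_right, mink_neg_right,
              mink_comm (D₁ t) (Z₃ t), hg₂ t ht]
            ring
          rwa [e] at h1
        have := const_of_hasDerivAt_zero hIopen hIconn hder hs hs₀
        rwa [hZ₃0, hvv] at this
      have hg₇ : ∀ s ∈ I, mink (Z₂ s) (Z₃ s) = 0 := by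
        intro s hs
        have hder : ∀ t ∈ I, HasDerivAt (fun r => mink (Z₂ r) (Z₃ r)) 0 t := by
          intro t ht
          have h1 := hasDerivAt_mink (hZ₂has t ht) (hZ₃has t ht)
          have e : mink (mink (deriv D₁ t) (Z₂ t) • -(D₁ t)) (Z₃ t)
              + mink (Z₂ t) (mink (deriv D₁ t) (Z₃ t) • -(D₁ t)) = 0 := by
            rw [mink_smul_left, mink_neg_left, mink_smul_right, mink_neg_right,
              mink_comm (D₁ t) (Z₃ t), hg₂ t ht, hg₁ t ht]
            ring
          rwa [e] at h1
        have := const_of_hasDerivAt_zero hIopen hIconn hder hs hs₀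
        rwa [hZ₂0, hZ₃0, huv] at this
      -- assemble the frame
      refine ⟨D₁, Z₂, Z₃, d₁, fun s => mink (deriv D₁ s) (Z₂ s),
        fun s => mink (deriv D₁ s) (Z₃ s), ⟨hD₁s, hZ₂sm, hZ₃sm, ?_⟩,
        ⟨hd₁s, contDiffOn_mink hGsm hZ₂sm, contDiffOn_mink hGsm hZ₃sm⟩, ?_⟩
      · intro s hs
        refine ⟨(hprop s hs).1, hg₅ s hs, hg₆ s hs, ?_, ?_, hg₇ s hs,
          (hprop s hs).2.1, ?_, ?_⟩
        · rw [mink_comm]; exact hg₁ s hs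
        · rw [mink_comm]; exact hg₂ s hs
        · rw [mink_comm]; exact hg₃ s hs
        · rw [mink_comm]; exact hg₄ s hs
      · intro s hs
        refine ⟨(hprop s hs).2.2, ?_, ?_, ?_⟩
        · -- expansion of deriv D₁
          have hexp := mink_expand (hγn s hs) ((hprop s hs).1) (hg₅ s hs) (hg₆ s hs)
            ((hprop s hs).2.1)
            (by rw [mink_comm]; exact hg₃ s hs) (by rw [mink_comm]; exact hg₄ s hs)
            (by rw [mink_comm]; exact hg₁ s hs) (by rw [mink_comm]; exact hg₂ s hs)
            (hg₇ s hs) (deriv D₁ s)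
          have c1 : mink (deriv D₁ s) (deriv γ s) = -(d₁ s) := by
            rw [mink_comm]; exact hTDd s hs
          have c2 : mink (deriv D₁ s) (D₁ s) = 0 := hDDd s hs
          rw [c1, c2, neg_neg, zero_smul, add_zero] at hexp
          exact hexp
        · rw [(hZ₂has s hs).deriv, smul_neg, ← neg_smul]
        · rw [(hZ₃has s hs).deriv, smul_neg, ← neg_smul]
end
end

section
/- Every 2-regular time-like curve γ : I → 𝕃⁴ parametrized by proper time admits a generalized Bishop frame of type D. -/
open Set Real
open scoped NNReal Topology

noncomputable section

namespace BishopAux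

lemma mink_comm (x y : Fin 4 → ℝ) : mink x y = mink y x := by simp [mink]; ring

lemma mink_add_left (x y z : Fin 4 → ℝ) : mink (x + y) z = mink x z + mink y z := by
  simp [mink]; ring

lemma mink_sub_left (x y z : Fin 4 → ℝ) : mink (x - y) z = mink x z - mink y z := by
  simp [mink]; ring

lemma mink_smul_left (c : ℝ) (x z : Fin 4 → ℝ) : mink (c • x) z = c * mink x z := by
  simp [mink]; ring

lemma mink_smul_right (c : ℝ) (x z : Fin 4 → ℝ) : mink x (c • z) = c * mink x z := by
  simp [mink]; ring

lemma mink_add_right (x y z : Fin 4 → ℝ) : mink x (y + z) = mink x y + mink x z := by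
  simp [mink]; ring

lemma mink_zero_left (z : Fin 4 → ℝ) : mink 0 z = 0 := by simp [mink]

lemma mink_abs_le (x y : Fin 4 → ℝ) : |mink x y| ≤ 4 * ‖x‖ * ‖y‖ := by
  have h : ∀ i : Fin 4, |x i * y i| ≤ ‖x‖ * ‖y‖ := fun i => by
    rw [abs_mul]
    have hx := norm_le_pi_norm x i
    have hy := norm_le_pi_norm y i
    simp only [Real.norm_eq_abs] at hx hy
    exact mul_le_mul hx hy (abs_nonneg _) (norm_nonneg _)
  have h0 := h 0; have h1 := h 1; have h2 := h 2; have h3 := h 3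
  have := abs_nonneg (x 0 * y 0)
  simp only [mink]
  have : |(-(x 0 * y 0) + x 1 * y 1 + x 2 * y 2 + x 3 * y 3)| ≤
      |x 0 * y 0| + |x 1 * y 1| + |x 2 * y 2| + |x 3 * y 3| := by
    calc _ ≤ |(-(x 0 * y 0) + x 1 * y 1 + x 2 * y 2)| + |x 3 * y 3| := abs_add_le _ _
    _ ≤ (|(-(x 0 * y 0) + x 1 * y 1)| + |x 2 * y 2|) + |x 3 * y 3| := by
        gcongr; exact abs_add_le _ _
    _ ≤ ((|(-(x 0 * y 0))| + |x 1 * y 1|) + |x 2 * y 2|) + |x 3 * y 3| := by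
        gcongr; exact abs_add_le _ _
    _ = |x 0 * y 0| + |x 1 * y 1| + |x 2 * y 2| + |x 3 * y 3| := by rw [abs_neg]
  linarith

/-- A vector Minkowski-orthogonal to a unit time-like vector is space-like. -/
lemma spacelike_pos {T v : Fin 4 → ℝ} (hT : mink T T = -1) (hvT : mink v T = 0)
    (hv : v ≠ 0) : 0 < mink v v := by
  have hT0 : T 0 ≠ 0 := by
    intro h; simp only [mink, h] at hT; nlinarith [sq_nonneg (T 1), sq_nonneg (T 2), sq_nonneg (T 3)]
  simp only [mink] at hT hvT ⊢
  have key : (-(v 0 * v 0) + v 1 * v 1 + v 2 * v 2 + v 3 * v 3) * (T 0 * T 0)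
      = (v 1 * v 1 + v 2 * v 2 + v 3 * v 3)
        + ((v 1 * T 2 - v 2 * T 1) ^ 2 + (v 1 * T 3 - v 3 * T 1) ^ 2
          + (v 2 * T 3 - v 3 * T 2) ^ 2) := by
    linear_combination (v 0 * T 0 + (v 1 * T 1 + v 2 * T 2 + v 3 * T 3)) * hvT
      - (v 1 * v 1 + v 2 * v 2 + v 3 * v 3) * hT
  have hs : 0 < v 1 * v 1 + v 2 * v 2 + v 3 * v 3 := by
    rcases eq_or_ne (v 1) 0 with h1 | h1
    · rcases eq_or_ne (v 2) 0 with h2 | h2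
      · rcases eq_or_ne (v 3) 0 with h3 | h3
        · exfalso
          have hv0 : v 0 = 0 := by
            rw [h1, h2, h3] at hvT
            simp at hvT
            rcases hvT with h | h
            · exact h
            · exact absurd h hT0
          exact hv (funext fun i => by fin_cases i <;> assumption)
        · nlinarith [sq_nonneg (v 1), sq_nonneg (v 2), sq_pos_of_ne_zero h3]
      · nlinarith [sq_nonneg (v 1), sq_nonneg (v 3), sq_pos_of_ne_zero h2]
    · nlinarith [sq_nonneg (v 2), sq_nonneg (v 3), sq_pos_of_ne_zero h1]
  nlinarith [sq_pos_of_ne_zero hT0, sq_nonneg (v 1 * T 2 - v 2 * T 1),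
    sq_nonneg (v 1 * T 3 - v 3 * T 1), sq_nonneg (v 2 * T 3 - v 3 * T 2)]


/-- `mink` as a bilinear map. -/
def minkL : (Fin 4 → ℝ) →ₗ[ℝ] (Fin 4 → ℝ) →ₗ[ℝ] ℝ :=
  LinearMap.mk₂ ℝ mink mink_add_left mink_smul_left mink_add_right mink_smul_right

@[simp] lemma minkL_apply (x y : Fin 4 → ℝ) : minkL x y = mink x y := rfl

/-- There is a nonzero vector Minkowski-orthogonal to any three given vectors. -/
lemma exists_orth (a b c : Fin 4 → ℝ) :
    ∃ u : Fin 4 → ℝ, u ≠ 0 ∧ mink u a = 0 ∧ mink u b = 0 ∧ mink u c = 0 := by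
  set L : (Fin 4 → ℝ) →ₗ[ℝ] (Fin 3 → ℝ) :=
    LinearMap.pi ![minkL.flip a, minkL.flip b, minkL.flip c] with hL
  have hni : ¬ Function.Injective L := by
    intro hinj
    have := LinearMap.finrank_le_finrank_of_injective hinj
    simp [Module.finrank_fin_fun] at this
  rw [← LinearMap.ker_eq_bot] at hni
  obtain ⟨u, hu, hu0⟩ := Submodule.exists_mem_ne_zero_of_ne_bot hni
  refine ⟨u, hu0, ?_, ?_, ?_⟩
  · have := congrFun (LinearMap.mem_ker.mp hu) 0
    simpa [hL, LinearMap.pi_apply] using this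
  · have := congrFun (LinearMap.mem_ker.mp hu) 1
    simpa [hL, LinearMap.pi_apply] using this
  · have := congrFun (LinearMap.mem_ker.mp hu) 2
    simpa [hL, LinearMap.pi_apply] using this

/-- Orthogonal expansion with respect to an orthonormal Minkowski frame. -/
lemma expansion {T Z₁ Z₂ Z₃ : Fin 4 → ℝ}
    (hTT : mink T T = -1) (h11 : mink Z₁ Z₁ = 1) (h22 : mink Z₂ Z₂ = 1) (h33 : mink Z₃ Z₃ = 1)
    (h12 : mink Z₁ Z₂ = 0) (h13 : mink Z₁ Z₃ = 0) (h23 : mink Z₂ Z₃ = 0)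
    (hT1 : mink T Z₁ = 0) (hT2 : mink T Z₂ = 0) (hT3 : mink T Z₃ = 0) (v : Fin 4 → ℝ) :
    v = (-(mink v T)) • T + mink v Z₁ • Z₁ + mink v Z₂ • Z₂ + mink v Z₃ • Z₃ := by
  set u : Fin 4 → ℝ :=
    v - ((-(mink v T)) • T + mink v Z₁ • Z₁ + mink v Z₂ • Z₂ + mink v Z₃ • Z₃) with hu
  have huT : mink u T = 0 := by
    simp only [hu, mink_sub_left, mink_add_left, mink_smul_left]
    rw [hTT, mink_comm Z₁ T, mink_comm Z₂ T, mink_comm Z₃ T, hT1, hT2, hT3]; ring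
  have hu1 : mink u Z₁ = 0 := by
    simp only [hu, mink_sub_left, mink_add_left, mink_smul_left]
    rw [h11, mink_comm Z₂ Z₁, mink_comm Z₃ Z₁, hT1, h12, h13]; ring
  have hu2 : mink u Z₂ = 0 := by
    simp only [hu, mink_sub_left, mink_add_left, mink_smul_left]
    rw [h22, mink_comm Z₃ Z₂, hT2, h12, h23]; ring
  have hu3 : mink u Z₃ = 0 := by
    simp only [hu, mink_sub_left, mink_add_left, mink_smul_left]
    rw [h33, hT3, h13, h23]; ring
  have hu0 : u = 0 := by
    by_contra h0
    have huu : 0 < mink u u := spacelike_pos hTT huT h0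
    set F : Fin 5 → (Fin 4 → ℝ) := ![T, Z₁, Z₂, Z₃, u] with hF
    have hli : LinearIndependent ℝ F := by
      rw [Fintype.linearIndependent_iff]
      intro g hg
      have key : ∀ w : Fin 4 → ℝ,
          g 0 * mink T w + g 1 * mink Z₁ w + g 2 * mink Z₂ w + g 3 * mink Z₃ w
            + g 4 * mink u w = 0 := by
        intro w
        have h1 := map_sum (minkL.flip w) (fun i => g i • F i) Finset.univ
        rw [hg] at h1
        rw [Fin.sum_univ_five] at h1
        simp only [hF, Matrix.cons_val_zero, Matrix.cons_val_one, Matrix.head_cons,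
          Matrix.cons_val_succ, Matrix.cons_val_two, Matrix.cons_val_three, Matrix.cons_val_four, Matrix.tail_cons, map_zero, LinearMap.flip_apply, map_smul, minkL_apply,
          smul_eq_mul] at h1
        linarith [h1]
      have k0 := key T
      have k1 := key Z₁
      have k2 := key Z₂
      have k3 := key Z₃
      have k4 := key u
      rw [hTT, mink_comm Z₁ T, hT1, mink_comm Z₂ T, hT2, mink_comm Z₃ T, hT3, huT] at k0
      rw [h11, hT1, mink_comm Z₂ Z₁, h12, mink_comm Z₃ Z₁, h13, hu1] at k1
      rw [h22, hT2, h12, mink_comm Z₃ Z₂, h23, hu2] at k2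
      rw [h33, hT3, h13, h23, hu3] at k3
      rw [mink_comm T u, huT, mink_comm Z₁ u, hu1, mink_comm Z₂ u, hu2,
        mink_comm Z₃ u, hu3] at k4
      have hg4 : g 4 = 0 := by
        have : g 4 * mink u u = 0 := by linarith
        rcases mul_eq_zero.mp this with h | h
        · exact h
        · exact absurd h (ne_of_gt huu)
      have hg0 : g 0 = 0 := by
        have : g 0 * mink u T = 0 := by rw [huT]; ring
        nlinarith [k0, hg4]
      have hg1 : g 1 = 0 := by nlinarith [k1, hg4]
      have hg2 : g 2 = 0 := by nlinarith [k2, hg4]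
      have hg3 : g 3 = 0 := by nlinarith [k3, hg4]
      intro i
      fin_cases i <;> assumption
    have hcard := hli.fintype_card_le_finrank
    simp [Module.finrank_fin_fun] at hcard
  exact sub_eq_zero.mp hu0

lemma hasDerivAt_mink {f g : ℝ → Fin 4 → ℝ} {f' g' : Fin 4 → ℝ} {s : ℝ}
    (hf : HasDerivAt f f' s) (hg : HasDerivAt g g' s) :
    HasDerivAt (fun t => mink (f t) (g t)) (mink f' (g s) + mink (f s) g') s := by
  have hfc : ∀ i : Fin 4, HasDerivAt (fun t => f t i) (f' i) s := fun i =>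
    hasDerivAt_pi.mp hf i
  have hgc : ∀ i : Fin 4, HasDerivAt (fun t => g t i) (g' i) s := fun i =>
    hasDerivAt_pi.mp hg i
  have h : HasDerivAt (fun t => -(f t 0 * g t 0) + f t 1 * g t 1 + f t 2 * g t 2 + f t 3 * g t 3)
      (-(f' 0 * g s 0 + f s 0 * g' 0) + (f' 1 * g s 1 + f s 1 * g' 1)
        + (f' 2 * g s 2 + f s 2 * g' 2) + (f' 3 * g s 3 + f s 3 * g' 3)) s := by
    exact ((((hfc 0).mul (hgc 0)).neg.add ((hfc 1).mul (hgc 1))).add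
      ((hfc 2).mul (hgc 2))).add ((hfc 3).mul (hgc 3))
  have : (-(f' 0 * g s 0 + f s 0 * g' 0) + (f' 1 * g s 1 + f s 1 * g' 1)
      + (f' 2 * g s 2 + f s 2 * g' 2) + (f' 3 * g s 3 + f s 3 * g' 3))
      = mink f' (g s) + mink (f s) g' := by simp [mink]; ring
  rw [this] at h
  exact h

lemma contDiffOn_coord {n : WithTop ℕ∞} {f : ℝ → Fin 4 → ℝ} {s : Set ℝ}
    (hf : ContDiffOn ℝ n f s)
    (i : Fin 4) : ContDiffOn ℝ n (fun t => f t i) s := by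
  have : ContDiff ℝ n (ContinuousLinearMap.proj i :
      (Fin 4 → ℝ) →L[ℝ] ℝ) := contDiff_apply ℝ ℝ i
  exact this.comp_contDiffOn hf

lemma contDiffOn_mink {n : WithTop ℕ∞} {f g : ℝ → Fin 4 → ℝ} {s : Set ℝ}
    (hf : ContDiffOn ℝ n f s) (hg : ContDiffOn ℝ n g s) :
    ContDiffOn ℝ n (fun t => mink (f t) (g t)) s := by
  simp only [mink]
  exact ((((contDiffOn_coord hf 0).mul (contDiffOn_coord hg 0)).neg.add
    ((contDiffOn_coord hf 1).mul (contDiffOn_coord hg 1))).add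
    ((contDiffOn_coord hf 2).mul (contDiffOn_coord hg 2))).add
    ((contDiffOn_coord hf 3).mul (contDiffOn_coord hg 3))

/-- A real function with vanishing derivative on an open convex set is constant there. -/
lemma const_of_deriv_zero {s : Set ℝ} (hso : IsOpen s) (hsc : Convex ℝ s) {φ : ℝ → ℝ}
    (hφ : ∀ t ∈ s, HasDerivAt φ 0 t) {x y : ℝ} (hx : x ∈ s) (hy : y ∈ s) : φ x = φ y := by
  apply hsc.is_const_of_fderivWithin_eq_zero (𝕜 := ℝ)
    (fun t ht => ((hφ t ht).differentiableAt).differentiableWithinAt) _ hx hy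
  intro t ht
  rw [fderivWithin_of_isOpen hso ht]
  have := (hφ t ht).hasFDerivAt.fderiv
  rw [this]
  ext w
  simp

/-- If `φ` is constant on an open set, any derivative of it there vanishes. -/
lemma deriv_const_on {I : Set ℝ} (hIo : IsOpen I) {φ : ℝ → ℝ} {c d s : ℝ}
    (hs : s ∈ I) (hφ : HasDerivAt φ d s) (hconst : ∀ t ∈ I, φ t = c) : d = 0 := by
  have he : φ =ᶠ[𝓝 s] fun _ => c :=
    Filter.eventually_of_mem (hIo.mem_nhds hs) hconst
  have h0 : HasDerivAt φ 0 s := (hasDerivAt_const s c).congr_of_eventuallyEq he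
  exact hφ.unique h0

/-! ### ODE machinery -/

section ODE

variable {E : Type*} [NormedAddCommGroup E] [NormedSpace ℝ E] [CompleteSpace E]

/-- `f` solves the ODE `f' = v t f` on the closed interval `[a, b]`. -/
def IsSolOn (v : ℝ → E → E) (a b : ℝ) (f : ℝ → E) : Prop :=
  ∀ t ∈ Icc a b, HasDerivWithinAt f (v t (f t)) (Icc a b) t

lemma IsSolOn.mono {v : ℝ → E → E} {a b a' b' : ℝ} {f : ℝ → E}
    (h : IsSolOn v a b f) (hsub : Icc a' b' ⊆ Icc a b) : IsSolOn v a' b' f :=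
  fun t ht => ((h t (hsub ht)).mono hsub)

lemma hasDerivWithinAt_singleton' (f : ℝ → E) (x : ℝ) (d : E) :
    HasDerivWithinAt f d {x} x := by
  rw [hasDerivWithinAt_iff_isLittleO, nhdsWithin_singleton, Asymptotics.isLittleO_pure]
  simp

lemma IsSolOn.glue {v : ℝ → E → E} {a b c : ℝ} {f g : ℝ → E}
    (hab : a ≤ b) (hbc : b ≤ c) (hf : IsSolOn v a b f) (hg : IsSolOn v b c g)
    (hfg : f b = g b) : IsSolOn v a c (fun t => if t ≤ b then f t else g t) := by
  intro t ht
  set h : ℝ → E := fun t => if t ≤ b then f t else g t with hh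
  have hEf : ∀ x ∈ Icc a b, h x = f x := fun x hx => if_pos hx.2
  have hEg : ∀ x ∈ Icc b c, h x = g x := by
    intro x hx
    rcases eq_or_lt_of_le hx.1 with h1 | h1
    · simp only [hh, ← h1, if_pos le_rfl]; exact hfg
    · exact if_neg (not_le.mpr h1)
  have hIcc : Icc a b ∪ Icc b c = Icc a c := Icc_union_Icc_eq_Icc hab hbc
  have h1 : HasDerivWithinAt h (v t (h t)) (Icc a b) t := by
    by_cases htb : t ∈ Icc a b
    · have := (hf t htb).congr hEf (hEf t htb)
      rwa [hEf t htb]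
    · rw [hasDerivWithinAt_iff_hasFDerivWithinAt]
      exact HasFDerivWithinAt.of_notMem_closure (by rwa [closure_Icc])
  have h2 : HasDerivWithinAt h (v t (h t)) (Icc b c) t := by
    by_cases htb : t ∈ Icc b c
    · have := (hg t htb).congr hEg (hEg t htb)
      rwa [hEg t htb]
    · rw [hasDerivWithinAt_iff_hasFDerivWithinAt]
      exact HasFDerivWithinAt.of_notMem_closure (by rwa [closure_Icc])
  have := h1.union h2
  rwa [hIcc] at this

/-- Local existence with a uniform time step for a Lipschitz-linear ODE. -/
lemma local_step {v : ℝ → E → E} {a b : ℝ} {K : ℝ≥0}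
    (hcont : ∀ x, ContinuousOn (fun t => v t x) (Icc a b))
    (hlip : ∀ t ∈ Icc a b, LipschitzWith K (v t))
    (h0 : ∀ t ∈ Icc a b, v t 0 = 0) :
    ∀ t₀ ∈ Icc a b, ∀ x₀ : E, ∃ f, f t₀ = x₀ ∧
      IsSolOn v (max a (t₀ - 1/(2*((K : ℝ)+1)))) (min b (t₀ + 1/(2*((K : ℝ)+1)))) f := by
  intro t₀ ht₀ x₀
  set ε : ℝ := 1/(2*((K : ℝ)+1)) with hε
  have hK0 : (0 : ℝ) ≤ (K : ℝ) := K.coe_nonneg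
  have hε0 : 0 < ε := by rw [hε]; positivity
  have hsub : Icc (max a (t₀ - ε)) (min b (t₀ + ε)) ⊆ Icc a b :=
    Icc_subset_Icc (le_max_left _ _) (min_le_left _ _)
  have ht₀m : t₀ ∈ Icc (max a (t₀ - ε)) (min b (t₀ + ε)) :=
    ⟨max_le ht₀.1 (by linarith), le_min ht₀.2 (by linarith)⟩
  have hpl : IsPicardLindelof v (⟨t₀, ht₀m⟩ : Icc (max a (t₀ - ε)) (min b (t₀ + ε))) x₀
      (‖x₀‖₊ + 1) 0 (K * (2 * ‖x₀‖₊ + 1)) K := by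
    constructor
    · exact fun t ht => ((hlip t (hsub ht)).lipschitzOnWith)
    · exact fun x _ => (hcont x).mono hsub
    · intro t ht x hx
      push_cast
      have hb : ‖x‖ ≤ 2 * ‖x₀‖ + 1 := by
        have := mem_closedBall_iff_norm.mp hx
        push_cast at this
        have h4 : ‖x‖ ≤ ‖x₀‖ + ‖x - x₀‖ := norm_le_norm_add_norm_sub' x x₀
        linarith
      have := ((hlip t (hsub ht)).dist_le_mul x 0)
      rw [h0 t (hsub ht), dist_zero_right, dist_zero_right] at this
      calc ‖v t x‖ ≤ (K : ℝ) * ‖x‖ := this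
        _ ≤ (K : ℝ) * (2 * ‖x₀‖ + 1) := by
            exact mul_le_mul_of_nonneg_left hb hK0
    · push_cast
      rw [sub_zero]
      have hmax : max (min b (t₀ + ε) - t₀) (t₀ - max a (t₀ - ε)) ≤ ε := by
        apply max_le
        · have := min_le_right b (t₀ + ε); linarith
        · have := le_max_right a (t₀ - ε); linarith
      have hCε : (K : ℝ) * (2 * ‖x₀‖ + 1) * ε ≤ ‖x₀‖ + 1 := by
        have h2 : (0:ℝ) < 2*((K:ℝ)+1) := by positivity
        rw [hε, mul_one_div, div_le_iff₀ h2]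
        nlinarith [norm_nonneg x₀]
      calc (K : ℝ) * (2 * ‖x₀‖ + 1) * max (min b (t₀ + ε) - t₀) (t₀ - max a (t₀ - ε))
          ≤ (K : ℝ) * (2 * ‖x₀‖ + 1) * ε := by
            apply mul_le_mul_of_nonneg_left hmax; positivity
        _ ≤ ‖x₀‖ + 1 := hCε
  obtain ⟨f, hf0, hf⟩ := hpl.exists_eq_forall_mem_Icc_hasDerivWithinAt₀
  exact ⟨f, hf0, hf⟩

/-- Chaining local solutions. -/
lemma chain_step {v : ℝ → E → E} {a b ε : ℝ} (hε : 0 < ε)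
    (hstep : ∀ t₀ ∈ Icc a b, ∀ x₀ : E, ∃ f, f t₀ = x₀ ∧
      IsSolOn v (max a (t₀ - ε)) (min b (t₀ + ε)) f) :
    ∀ n : ℕ, ∀ t₀ ∈ Icc a b, ∀ x₀ : E, ∃ f, f t₀ = x₀ ∧
      IsSolOn v (max a (t₀ - n * ε)) (min b (t₀ + n * ε)) f := by
  intro n
  induction n with
  | zero =>
    intro t₀ ht₀ x₀
    refine ⟨fun _ => x₀, rfl, ?_⟩
    have h1 : max a (t₀ - (0:ℕ) * ε) = t₀ := by
      push_cast; rw [zero_mul, sub_zero]; exact max_eq_right ht₀.1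
    have h2 : min b (t₀ + (0:ℕ) * ε) = t₀ := by
      push_cast; rw [zero_mul, add_zero]; exact min_eq_right ht₀.2
    rw [h1, h2]
    intro t ht
    rw [Icc_self] at ht ⊢
    rw [mem_singleton_iff] at ht
    subst ht
    exact hasDerivWithinAt_singleton' _ _ _
  | succ n ih =>
    intro t₀ ht₀ x₀
    have hnε : (0:ℝ) ≤ n * ε := by positivity
    obtain ⟨f, hf0, hf⟩ := ih t₀ ht₀ x₀
    set p := max a (t₀ - n * ε) with hp
    set q := min b (t₀ + n * ε) with hq
    have hpt₀ : p ≤ t₀ := max_le ht₀.1 (by linarith)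
    have ht₀q : t₀ ≤ q := le_min ht₀.2 (by linarith)
    have hpI : p ∈ Icc a b := ⟨le_max_left _ _, hpt₀.trans ht₀.2⟩
    have hqI : q ∈ Icc a b := ⟨ht₀.1.trans ht₀q, min_le_left _ _⟩
    have hpq : p ≤ q := hpt₀.trans ht₀q
    obtain ⟨g, hg0, hg⟩ := hstep q hqI (f q)
    have hg' : IsSolOn v q (min b (q + ε)) g :=
      hg.mono (Icc_subset_Icc (max_le hqI.1 (by linarith)) le_rfl)
    have hqq : q ≤ min b (q + ε) := le_min hqI.2 (by linarith)
    have h₁sol : IsSolOn v p (min b (q + ε)) (fun t => if t ≤ q then f t else g t) :=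
      hf.glue hpq hqq hg' hg0.symm
    obtain ⟨g₂, hg₂0, hg₂⟩ := hstep p hpI (f p)
    have hg₂' : IsSolOn v (max a (p - ε)) p g₂ :=
      hg₂.mono (Icc_subset_Icc le_rfl (le_min hpI.2 (by linarith)))
    have hmatch : g₂ p = (fun t => if t ≤ q then f t else g t) p := by
      rw [hg₂0]
      simp only [if_pos hpq]
    have hpp : max a (p - ε) ≤ p := max_le hpI.1 (by linarith)
    have hεp : 0 ≤ ε := hε.le
    refine ⟨_, ?_, (hg₂'.glue hpp (hpq.trans hqq) h₁sol hmatch).mono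
      (Icc_subset_Icc ?_ ?_)⟩
    · by_cases ht : t₀ ≤ p
      · have hteq : t₀ = p := le_antisymm ht hpt₀
        simp only [if_pos ht]
        rw [hteq, hg₂0, ← hteq, hf0]
      · simp only [if_neg ht, if_pos ht₀q]
        exact hf0
    · apply max_le (le_max_left _ _)
      have h5 : p - ε ≤ max a (t₀ - (↑(n+1)) * ε) := by
        rcases le_total a (t₀ - n * ε) with hc | hc
        · have : p = t₀ - n * ε := max_eq_right hc
          rw [this]
          apply le_trans _ (le_max_right _ _)
          push_cast
          linarith
        · have : p = a := max_eq_left hc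
          rw [this]
          exact le_trans (by linarith) (le_max_left _ _)
      exact h5
    · apply le_min (min_le_left _ _)
      rcases le_total b (t₀ + n * ε) with hc | hc
      · have : q = b := min_eq_left hc
        rw [this]
        exact le_trans (min_le_left _ _) (by linarith)
      · have : q = t₀ + n * ε := min_eq_right hc
        rw [this]
        apply le_trans (min_le_right _ _)
        push_cast
        linarith

/-- Existence of a solution on a whole compact interval. -/
lemma sol_Icc {v : ℝ → E → E} {a b : ℝ} {K : ℝ≥0}
    (hcont : ∀ x, ContinuousOn (fun t => v t x) (Icc a b))
    (hlip : ∀ t ∈ Icc a b, LipschitzWith K (v t))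
    (h0 : ∀ t ∈ Icc a b, v t 0 = 0) :
    ∀ t₀ ∈ Icc a b, ∀ x₀ : E, ∃ f, f t₀ = x₀ ∧ IsSolOn v a b f := by
  intro t₀ ht₀ x₀
  set ε : ℝ := 1/(2*((K : ℝ)+1)) with hε
  have hε0 : 0 < ε := by rw [hε]; positivity
  obtain ⟨n, hn⟩ := exists_nat_ge ((b - a) / ε)
  have hn' : b - a ≤ n * ε := by
    rw [div_le_iff₀ hε0] at hn
    linarith
  obtain ⟨f, hf0, hf⟩ := chain_step hε0 (local_step hcont hlip h0) n t₀ ht₀ x₀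
  refine ⟨f, hf0, ?_⟩
  have h1 : max a (t₀ - n * ε) = a := max_eq_left (by linarith [ht₀.2])
  have h2 : min b (t₀ + n * ε) = b := min_eq_left (by linarith [ht₀.1])
  rwa [h1, h2] at hf

/-- Uniqueness of solutions. -/
lemma sol_unique {v : ℝ → E → E} {a b : ℝ} {K : ℝ≥0} (hab : a ≤ b)
    (hlip : ∀ t ∈ Icc a b, LipschitzWith K (v t))
    {f g : ℝ → E} (hf : IsSolOn v a b f) (hg : IsSolOn v a b g)
    {t₀ : ℝ} (ht₀ : t₀ ∈ Icc a b) (heq : f t₀ = g t₀) :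
    EqOn f g (Icc a b) := by
  set w : ℝ → E → E := fun t => v (min b (max a t)) with hw
  have hwv : ∀ t ∈ Icc a b, w t = v t := by
    intro t ht
    rw [hw]
    simp only []
    rw [max_eq_right ht.1, min_eq_right ht.2]
  have hwlip : ∀ t : ℝ, LipschitzOnWith K (w t) univ := by
    intro t
    apply LipschitzWith.lipschitzOnWith
    apply hlip
    constructor
    · exact le_min hab (le_max_left _ _)
    · exact min_le_left _ _
  have hcf : ContinuousOn f (Icc a b) := fun t ht => (hf t ht).continuousWithinAt
  have hcg : ContinuousOn g (Icc a b) := fun t ht => (hg t ht).continuousWithinAt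
  intro u hu
  rcases le_total t₀ u with htu | htu
  · -- forward
    have hsub : Icc t₀ u ⊆ Icc a b := Icc_subset_Icc ht₀.1 hu.2
    have key : ∀ h : ℝ → E, IsSolOn v a b h →
        ∀ t ∈ Ico t₀ u, HasDerivWithinAt h (w t (h t)) (Ici t) t := by
      intro h hsol t ht
      have htab : t ∈ Icc a b := hsub ⟨ht.1, ht.2.le⟩
      have htb : t < b := lt_of_lt_of_le ht.2 hu.2
      have hmem : Icc a b ∈ 𝓝[Ici t] t := by
        apply Filter.mem_of_superset (Filter.inter_mem self_mem_nhdsWithin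
          (mem_nhdsWithin_of_mem_nhds (Iio_mem_nhds htb)))
        rintro x ⟨hx1, hx2⟩
        exact ⟨htab.1.trans hx1, hx2.le⟩
      have := (hsol t htab).mono_of_mem_nhdsWithin hmem
      rw [hwv t htab]
      exact this
    have := ODE_solution_unique_of_mem_Icc_right (v := w) (s := fun _ => univ)
      (fun t _ => hwlip t) (hcf.mono hsub) (key f hf) (fun _ _ => mem_univ _)
      (hcg.mono hsub) (key g hg) (fun _ _ => mem_univ _) heq
    exact this ⟨htu, le_rfl⟩
  · -- backward
    have hsub : Icc u t₀ ⊆ Icc a b := Icc_subset_Icc hu.1 ht₀.2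
    have key : ∀ h : ℝ → E, IsSolOn v a b h →
        ∀ t ∈ Ioc u t₀, HasDerivWithinAt h (w t (h t)) (Iic t) t := by
      intro h hsol t ht
      have htab : t ∈ Icc a b := hsub ⟨ht.1.le, ht.2⟩
      have hta : a < t := lt_of_le_of_lt hu.1 ht.1
      have hmem : Icc a b ∈ 𝓝[Iic t] t := by
        apply Filter.mem_of_superset (Filter.inter_mem self_mem_nhdsWithin
          (mem_nhdsWithin_of_mem_nhds (Ioi_mem_nhds hta)))
        rintro x ⟨hx1, hx2⟩
        exact ⟨hx2.le, hx1.trans htab.2⟩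
      have := (hsol t htab).mono_of_mem_nhdsWithin hmem
      rw [hwv t htab]
      exact this
    have := ODE_solution_unique_of_mem_Icc_left (v := w) (s := fun _ => univ)
      (fun t _ => hwlip t) (hcf.mono hsub) (key f hf) (fun _ _ => mem_univ _)
      (hcg.mono hsub) (key g hg) (fun _ _ => mem_univ _) heq
    exact this ⟨le_rfl, htu⟩

/-- Global existence for a linear-growth ODE on an open order-connected set. -/
lemma global_sol {I : Set ℝ} (hIo : IsOpen I) (hIc : I.OrdConnected) {v : ℝ → E → E}
    (hcont : ∀ x, ContinuousOn (fun t => v t x) I)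
    (hlip : ∀ a ∈ I, ∀ b ∈ I, ∃ K : ℝ≥0, ∀ t ∈ Icc a b, LipschitzWith K (v t))
    (h0 : ∀ t ∈ I, v t 0 = 0)
    {s₀ : ℝ} (hs₀ : s₀ ∈ I) (x₀ : E) :
    ∃ f : ℝ → E, f s₀ = x₀ ∧ ∀ s ∈ I, HasDerivAt f (v s (f s)) s := by
  classical
  have hIccI : ∀ a ∈ I, ∀ b ∈ I, Icc a b ⊆ I := fun a ha b hb => hIc.out ha hb
  have hex : ∀ s ∈ I, ∃ a b, a ∈ I ∧ b ∈ I ∧ a < s ∧ s < b ∧ a < s₀ ∧ s₀ < b ∧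
      ∃ f : ℝ → E, f s₀ = x₀ ∧ IsSolOn v a b f := by
    intro s hs
    set m := min s s₀ with hm
    set M := max s s₀ with hM
    have hmI : m ∈ I := by rw [hm]; rcases min_cases s s₀ with ⟨h, _⟩ | ⟨h, _⟩ <;> rw [h] <;> assumption
    have hMI : M ∈ I := by rw [hM]; rcases max_cases s s₀ with ⟨h, _⟩ | ⟨h, _⟩ <;> rw [h] <;> assumption
    obtain ⟨δ₁, hδ₁, hball₁⟩ := Metric.isOpen_iff.mp hIo m hmI
    obtain ⟨δ₂, hδ₂, hball₂⟩ := Metric.isOpen_iff.mp hIo M hMI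
    refine ⟨m - δ₁/2, M + δ₂/2, ?_, ?_, ?_, ?_, ?_, ?_, ?_⟩
    · apply hball₁; rw [Metric.mem_ball, Real.dist_eq, abs_of_nonpos (by linarith)]; linarith
    · apply hball₂; rw [Metric.mem_ball, Real.dist_eq, abs_of_nonneg (by linarith)]; linarith
    · have : m ≤ s := min_le_left _ _; linarith
    · have : s ≤ M := le_max_left _ _; linarith
    · have : m ≤ s₀ := min_le_right _ _; linarith
    · have : s₀ ≤ M := le_max_right _ _; linarith
    · have haI : m - δ₁/2 ∈ I := by
        apply hball₁; rw [Metric.mem_ball, Real.dist_eq, abs_of_nonpos (by linarith)]; linarith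
      have hbI : M + δ₂/2 ∈ I := by
        apply hball₂; rw [Metric.mem_ball, Real.dist_eq, abs_of_nonneg (by linarith)]; linarith
      obtain ⟨K, hK⟩ := hlip _ haI _ hbI
      have hsubI : Icc (m - δ₁/2) (M + δ₂/2) ⊆ I := hIccI _ haI _ hbI
      apply sol_Icc (fun x => (hcont x).mono hsubI) hK
        (fun t ht => h0 t (hsubI ht)) s₀
      constructor
      · have : m ≤ s₀ := min_le_right _ _; linarith
      · have : s₀ ≤ M := le_max_right _ _; linarith
  choose a b haI hbI has hsb has₀ hs₀b f hf0 hfsol using hex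
  set F : ℝ → E := fun s => if h : s ∈ I then f s h s else x₀ with hF
  have hagree : ∀ s (hs : s ∈ I), ∀ u (hu : u ∈ I), u ∈ Icc (a s hs) (b s hs) →
      f u hu u = f s hs u := by
    intro s hs u hu huIcc
    set c := max (a s hs) (a u hu) with hc
    set d := min (b s hs) (b u hu) with hd
    have hcI : c ∈ I := by
      rcases max_cases (a s hs) (a u hu) with ⟨h, _⟩ | ⟨h, _⟩ <;> rw [hc, h]
      · exact haI s hs
      · exact haI u hu
    have hdI : d ∈ I := by
      rcases min_cases (b s hs) (b u hu) with ⟨h, _⟩ | ⟨h, _⟩ <;> rw [hd, h]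
      · exact hbI s hs
      · exact hbI u hu
    have hs₀cd : s₀ ∈ Icc c d := by
      constructor
      · exact max_le (has₀ s hs).le (has₀ u hu).le
      · exact le_min (hs₀b s hs).le (hs₀b u hu).le
    have hucd : u ∈ Icc c d := by
      constructor
      · exact max_le huIcc.1 (has u hu).le
      · exact le_min huIcc.2 (hsb u hu).le
    have hcd : c ≤ d := hs₀cd.1.trans hs₀cd.2
    obtain ⟨K, hK⟩ := hlip _ hcI _ hdI
    have hsub1 : Icc c d ⊆ Icc (a s hs) (b s hs) :=
      Icc_subset_Icc (le_max_left _ _) (min_le_left _ _)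
    have hsub2 : Icc c d ⊆ Icc (a u hu) (b u hu) :=
      Icc_subset_Icc (le_max_right _ _) (min_le_right _ _)
    have heq0 : f u hu s₀ = f s hs s₀ := by rw [hf0 u hu, hf0 s hs]
    exact sol_unique hcd hK ((hfsol u hu).mono hsub2) ((hfsol s hs).mono hsub1)
      hs₀cd heq0 hucd
  refine ⟨F, ?_, ?_⟩
  · rw [hF]
    simp only [dif_pos hs₀]
    exact hf0 s₀ hs₀
  · intro s hs
    have hsIcc : s ∈ Icc (a s hs) (b s hs) := ⟨(has s hs).le, (hsb s hs).le⟩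
    have hder : HasDerivAt (f s hs) (v s (f s hs s)) s :=
      (hfsol s hs s hsIcc).hasDerivAt (Icc_mem_nhds (has s hs) (hsb s hs))
    have hFs : F s = f s hs s := by rw [hF]; simp only [dif_pos hs]
    have hev : F =ᶠ[nhds s] f s hs := by
      have hU : Ioo (a s hs) (b s hs) ∩ I ∈ nhds s := by
        apply Filter.inter_mem
        · exact Ioo_mem_nhds (has s hs) (hsb s hs)
        · exact hIo.mem_nhds hs
      apply Filter.eventuallyEq_of_mem hU
      rintro u ⟨huIoo, huI⟩
      have : F u = f u huI u := by rw [hF]; simp only [dif_pos huI]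
      rw [this]
      exact hagree s hs u huI ⟨huIoo.1.le, huIoo.2.le⟩
    have := hder.congr_of_eventuallyEq hev
    rwa [← hFs] at this

end ODE

end BishopAux

open BishopAux

/-- every 2-regular time-like curve parametrized by proper time admits a
generalized Bishop frame of type D. -/
theorem stmt_10 (I : Set ℝ) (hIopen : IsOpen I) (hIconn : I.OrdConnected)
    (γ : ℝ → Fin 4 → ℝ) (hγ : ProperTime I γ)
    (h2reg : ∀ s ∈ I, deriv (deriv γ) s ≠ 0) :
    AdmitsD I γ := by
  classical
  obtain ⟨hγs, hγp⟩ := hγ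
  rcases I.eq_empty_or_nonempty with hIe | ⟨s₀, hs₀⟩
  · subst hIe
    exact ⟨fun _ => 0, fun _ => 0, fun _ => 0, fun _ => 0, fun _ => 0, fun _ => 0,
      ⟨fun x hx => (notMem_empty x hx).elim, fun x hx => (notMem_empty x hx).elim,
        fun x hx => (notMem_empty x hx).elim, fun s hs => (notMem_empty s hs).elim⟩,
      ⟨fun x hx => (notMem_empty x hx).elim, fun x hx => (notMem_empty x hx).elim,
        fun x hx => (notMem_empty x hx).elim⟩,
      fun s hs => (notMem_empty s hs).elim⟩
  have hinf1 : ((⊤ : ℕ∞) : WithTop ℕ∞) + 1 ≤ ((⊤ : ℕ∞) : WithTop ℕ∞) := le_of_eq (by rfl)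
  have hle : ∀ n : ℕ, (n : WithTop ℕ∞) ≤ ((⊤ : ℕ∞) : WithTop ℕ∞) := fun n => by
    exact_mod_cast le_top
  have h1le : (1 : WithTop ℕ∞) ≤ ((⊤ : ℕ∞) : WithTop ℕ∞) := by
    exact_mod_cast (le_top : (1 : ℕ∞) ≤ ⊤)
  have hconv : Convex ℝ I := hIconn.convex
  set T : ℝ → Fin 4 → ℝ := deriv γ with hTdef
  have hTs : ContDiffOn ℝ (⊤ : ℕ∞) T I := hγs.deriv_of_isOpen hIopen hinf1
  set A : ℝ → Fin 4 → ℝ := deriv T with hAdef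
  have hAs : ContDiffOn ℝ (⊤ : ℕ∞) A I := hTs.deriv_of_isOpen hIopen hinf1
  have hTd : ∀ s ∈ I, HasDerivAt T (A s) s := by
    intro s hs
    have := (((hTs.differentiableOn (by simp)) s hs).differentiableAt
      (hIopen.mem_nhds hs)).hasDerivAt
    rw [hAdef]
    exact this
  have hTT : ∀ s ∈ I, mink (T s) (T s) = -1 := hγp
  have hAT : ∀ s ∈ I, mink (A s) (T s) = 0 := by
    intro s hs
    have hd := hasDerivAt_mink (hTd s hs) (hTd s hs)
    have h0 := deriv_const_on hIopen hs hd hTT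
    have hcm := mink_comm (T s) (A s)
    linarith
  have hAA : ∀ s ∈ I, 0 < mink (A s) (A s) := fun s hs =>
    spacelike_pos (hTT s hs) (hAT s hs) (h2reg s hs)
  set κ : ℝ → ℝ := fun s => Real.sqrt (mink (A s) (A s)) with hκdef
  have hκpos : ∀ s ∈ I, 0 < κ s := fun s hs => Real.sqrt_pos.mpr (hAA s hs)
  have hκsq : ∀ s ∈ I, κ s * κ s = mink (A s) (A s) := fun s hs =>
    Real.mul_self_sqrt (hAA s hs).le
  have hκs : ContDiffOn ℝ (⊤ : ℕ∞) κ I :=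
    (contDiffOn_mink hAs hAs).sqrt fun s hs => (hAA s hs).ne'
  set Z₁ : ℝ → Fin 4 → ℝ := fun s => (κ s)⁻¹ • A s with hZ₁def
  have hZ₁s : ContDiffOn ℝ (⊤ : ℕ∞) Z₁ I :=
    (hκs.inv fun s hs => (hκpos s hs).ne').smul hAs
  have hZ₁Z₁ : ∀ s ∈ I, mink (Z₁ s) (Z₁ s) = 1 := by
    intro s hs
    rw [hZ₁def]
    simp only [mink_smul_left, mink_smul_right]
    rw [← hκsq s hs]
    have h := (hκpos s hs).ne'
    field_simp
  have hZ₁T : ∀ s ∈ I, mink (Z₁ s) (T s) = 0 := by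
    intro s hs
    rw [hZ₁def]
    simp only [mink_smul_left]
    rw [hAT s hs, mul_zero]
  have hAZ : ∀ s ∈ I, A s = κ s • Z₁ s := by
    intro s hs
    rw [hZ₁def]
    simp only [smul_smul]
    rw [mul_inv_cancel₀ (hκpos s hs).ne', one_smul]
  set W : ℝ → Fin 4 → ℝ := deriv Z₁ with hWdef
  have hWs : ContDiffOn ℝ (⊤ : ℕ∞) W I := hZ₁s.deriv_of_isOpen hIopen hinf1
  have hZ₁d : ∀ s ∈ I, HasDerivAt Z₁ (W s) s := by
    intro s hs
    have := (((hZ₁s.differentiableOn (by simp)) s hs).differentiableAt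
      (hIopen.mem_nhds hs)).hasDerivAt
    rw [hWdef]
    exact this
  have hZ₁A : ∀ s ∈ I, mink (Z₁ s) (A s) = κ s := by
    intro s hs
    rw [hAZ s hs, mink_smul_right, hZ₁Z₁ s hs, mul_one]
  have hWT : ∀ s ∈ I, mink (W s) (T s) = -(κ s) := by
    intro s hs
    have hd := hasDerivAt_mink (hZ₁d s hs) (hTd s hs)
    have h0 := deriv_const_on hIopen hs hd hZ₁T
    rw [hZ₁A s hs] at h0
    linarith
  have hWZ₁ : ∀ s ∈ I, mink (W s) (Z₁ s) = 0 := by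
    intro s hs
    have hd := hasDerivAt_mink (hZ₁d s hs) (hZ₁d s hs)
    have h0 := deriv_const_on hIopen hs hd hZ₁Z₁
    have hcm := mink_comm (Z₁ s) (W s)
    linarith
  set v : ℝ → (Fin 4 → ℝ) → (Fin 4 → ℝ) := fun t x => (-(mink x (W t))) • Z₁ t with hvdef
  have hWc : ContinuousOn W I := hWs.continuousOn
  have hZ₁c : ContinuousOn Z₁ I := hZ₁s.continuousOn
  have hvcont : ∀ x : Fin 4 → ℝ, ContinuousOn (fun t => v t x) I := by
    intro x
    rw [hvdef]
    exact ((contDiffOn_mink contDiffOn_const hWs).continuousOn).neg.smul hZ₁c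
  have hvlip : ∀ a ∈ I, ∀ b ∈ I, ∃ K : ℝ≥0, ∀ t ∈ Icc a b, LipschitzWith K (v t) := by
    intro a ha b hb
    have hsubI : Icc a b ⊆ I := hIconn.out ha hb
    obtain ⟨C₁, hC₁⟩ := isCompact_Icc.exists_bound_of_continuousOn (hWc.mono hsubI)
    obtain ⟨C₂, hC₂⟩ := isCompact_Icc.exists_bound_of_continuousOn (hZ₁c.mono hsubI)
    refine ⟨Real.toNNReal (4 * max C₁ 0 * max C₂ 0), ?_⟩
    intro t ht
    apply LipschitzWith.of_dist_le_mul
    intro x y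
    rw [dist_eq_norm, dist_eq_norm]
    have hxy : v t x - v t y = (-(mink (x - y) (W t))) • Z₁ t := by
      rw [hvdef]
      simp only []
      rw [← sub_smul, mink_sub_left]
      congr 1
      ring
    rw [hxy, norm_smul, Real.norm_eq_abs, abs_neg]
    have h1 : |mink (x - y) (W t)| ≤ 4 * ‖x - y‖ * ‖W t‖ := mink_abs_le _ _
    have h2 : ‖W t‖ ≤ max C₁ 0 := le_max_of_le_left (hC₁ t ht)
    have h3 : ‖Z₁ t‖ ≤ max C₂ 0 := le_max_of_le_left (hC₂ t ht)
    have hcoe : (Real.toNNReal (4 * max C₁ 0 * max C₂ 0) : ℝ) = 4 * max C₁ 0 * max C₂ 0 :=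
      Real.coe_toNNReal _ (by positivity)
    rw [hcoe]
    have h4 : (0:ℝ) ≤ ‖x - y‖ := norm_nonneg _
    have h5 : (0:ℝ) ≤ ‖Z₁ t‖ := norm_nonneg _
    have h6 : (0:ℝ) ≤ ‖W t‖ := norm_nonneg _
    have h7 : (0:ℝ) ≤ |mink (x - y) (W t)| := abs_nonneg _
    have hD₁ : (0:ℝ) ≤ max C₁ 0 := le_max_right _ _
    have hD₂ : (0:ℝ) ≤ max C₂ 0 := le_max_right _ _
    calc |mink (x - y) (W t)| * ‖Z₁ t‖
        ≤ (4 * ‖x - y‖ * ‖W t‖) * ‖Z₁ t‖ := mul_le_mul_of_nonneg_right h1 h5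
      _ ≤ (4 * ‖x - y‖ * max C₁ 0) * max C₂ 0 :=
          mul_le_mul (mul_le_mul_of_nonneg_left h2 (by positivity)) h3 h5 (by positivity)
      _ = 4 * max C₁ 0 * max C₂ 0 * ‖x - y‖ := by ring
  have hv0 : ∀ t ∈ I, v t 0 = 0 := by
    intro t ht
    rw [hvdef]
    simp only [mink_zero_left, neg_zero, zero_smul]
  -- initial orthonormal vectors at s₀
  obtain ⟨u₂, hu₂0, hu₂T, hu₂Z₁, -⟩ := exists_orth (T s₀) (Z₁ s₀) (Z₁ s₀)
  have hc₂ : 0 < mink u₂ u₂ := spacelike_pos (hTT s₀ hs₀) hu₂T hu₂0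
  set Y₂ : Fin 4 → ℝ := (Real.sqrt (mink u₂ u₂))⁻¹ • u₂ with hY₂def
  have hr₂ : Real.sqrt (mink u₂ u₂) ≠ 0 := (Real.sqrt_pos.mpr hc₂).ne'
  have hY₂Y₂ : mink Y₂ Y₂ = 1 := by
    rw [hY₂def, mink_smul_left, mink_smul_right, ← Real.mul_self_sqrt hc₂.le]
    field_simp
    rw [Real.sqrt_sq (Real.sqrt_nonneg _)]
  have hY₂T : mink Y₂ (T s₀) = 0 := by rw [hY₂def, mink_smul_left, hu₂T, mul_zero]
  have hY₂Z₁ : mink Y₂ (Z₁ s₀) = 0 := by rw [hY₂def, mink_smul_left, hu₂Z₁, mul_zero]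
  obtain ⟨u₃, hu₃0, hu₃T, hu₃Z₁, hu₃Y₂⟩ := exists_orth (T s₀) (Z₁ s₀) Y₂
  have hc₃ : 0 < mink u₃ u₃ := spacelike_pos (hTT s₀ hs₀) hu₃T hu₃0
  set Y₃ : Fin 4 → ℝ := (Real.sqrt (mink u₃ u₃))⁻¹ • u₃ with hY₃def
  have hr₃ : Real.sqrt (mink u₃ u₃) ≠ 0 := (Real.sqrt_pos.mpr hc₃).ne'
  have hY₃Y₃ : mink Y₃ Y₃ = 1 := by
    rw [hY₃def, mink_smul_left, mink_smul_right, ← Real.mul_self_sqrt hc₃.le]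
    field_simp
    rw [Real.sqrt_sq (Real.sqrt_nonneg _)]
  have hY₃T : mink Y₃ (T s₀) = 0 := by rw [hY₃def, mink_smul_left, hu₃T, mul_zero]
  have hY₃Z₁ : mink Y₃ (Z₁ s₀) = 0 := by rw [hY₃def, mink_smul_left, hu₃Z₁, mul_zero]
  have hY₂Y₃ : mink Y₂ Y₃ = 0 := by
    rw [hY₃def, mink_smul_right, mink_comm Y₂ u₃, hu₃Y₂, mul_zero]
  -- solve the ODEs
  obtain ⟨Z₂, hZ₂0, hZ₂d⟩ := global_sol hIopen hIconn hvcont hvlip hv0 hs₀ Y₂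
  obtain ⟨Z₃, hZ₃0, hZ₃d⟩ := global_sol hIopen hIconn hvcont hvlip hv0 hs₀ Y₃
  -- smoothness of solutions
  have hZsm : ∀ Z : ℝ → Fin 4 → ℝ, (∀ s ∈ I, HasDerivAt Z (v s (Z s)) s) →
      ContDiffOn ℝ (⊤ : ℕ∞) Z I := by
    intro Z hZd
    have hZc : ContinuousOn Z I := fun s hs => (hZd s hs).continuousAt.continuousWithinAt
    have hderiv_eq : ∀ s ∈ I, deriv Z s = v s (Z s) := fun s hs => (hZd s hs).deriv
    have hn : ∀ n : ℕ, ContDiffOn ℝ n Z I := by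
      intro n
      induction n with
      | zero => exact contDiffOn_zero.mpr hZc
      | succ n ih =>
        have hcast : ((n + 1 : ℕ) : WithTop ℕ∞) = (n : WithTop ℕ∞) + 1 := by push_cast; rfl
        rw [hcast, contDiffOn_succ_iff_deriv_of_isOpen hIopen]
        refine ⟨fun s hs => ((hZd s hs).differentiableAt).differentiableWithinAt,
          fun h => absurd h (by simp), ?_⟩
        apply ContDiffOn.congr _ hderiv_eq
        rw [hvdef]
        exact ((contDiffOn_mink ih (hWs.of_le (hle n))).neg).smul (hZ₁s.of_le (hle n))
    exact contDiffOn_infty.mpr hn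
  have hZ₂s : ContDiffOn ℝ (⊤ : ℕ∞) Z₂ I := hZsm Z₂ hZ₂d
  have hZ₃s : ContDiffOn ℝ (⊤ : ℕ∞) Z₃ I := hZsm Z₃ hZ₃d
  -- invariants
  have hαconst : ∀ Z : ℝ → Fin 4 → ℝ, (∀ s ∈ I, HasDerivAt Z (v s (Z s)) s) →
      ∀ s ∈ I, mink (Z s) (Z₁ s) = mink (Z s₀) (Z₁ s₀) := by
    intro Z hZd s hs
    refine const_of_deriv_zero hIopen hconv (φ := fun t => mink (Z t) (Z₁ t)) ?_ hs hs₀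
    intro t ht
    have hd := hasDerivAt_mink (hZd t ht) (hZ₁d t ht)
    have hval : mink (v t (Z t)) (Z₁ t) + mink (Z t) (W t) = 0 := by
      rw [hvdef]
      simp only []
      rw [mink_smul_left, hZ₁Z₁ t ht, mink_comm (Z t) (W t)]
      ring
    rwa [hval] at hd
  have hZ₂Z₁ : ∀ s ∈ I, mink (Z₂ s) (Z₁ s) = 0 := by
    intro s hs
    rw [hαconst Z₂ hZ₂d s hs, hZ₂0, hY₂Z₁]
  have hZ₃Z₁ : ∀ s ∈ I, mink (Z₃ s) (Z₁ s) = 0 := by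
    intro s hs
    rw [hαconst Z₃ hZ₃d s hs, hZ₃0, hY₃Z₁]
  have hβconst : ∀ Z : ℝ → Fin 4 → ℝ, (∀ s ∈ I, HasDerivAt Z (v s (Z s)) s) →
      (∀ s ∈ I, mink (Z s) (Z₁ s) = 0) →
      ∀ s ∈ I, mink (Z s) (T s) = mink (Z s₀) (T s₀) := by
    intro Z hZd hα s hs
    refine const_of_deriv_zero hIopen hconv (φ := fun t => mink (Z t) (T t)) ?_ hs hs₀
    intro t ht
    have hd := hasDerivAt_mink (hZd t ht) (hTd t ht)
    have hval : mink (v t (Z t)) (T t) + mink (Z t) (A t) = 0 := by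
      rw [hvdef]
      simp only []
      rw [mink_smul_left, hZ₁T t ht, hAZ t ht, mink_smul_right, hα t ht]
      ring
    rwa [hval] at hd
  have hZ₂T : ∀ s ∈ I, mink (Z₂ s) (T s) = 0 := by
    intro s hs
    rw [hβconst Z₂ hZ₂d hZ₂Z₁ s hs, hZ₂0, hY₂T]
  have hZ₃T : ∀ s ∈ I, mink (Z₃ s) (T s) = 0 := by
    intro s hs
    rw [hβconst Z₃ hZ₃d hZ₃Z₁ s hs, hZ₃0, hY₃T]
  have hνconst : ∀ Z : ℝ → Fin 4 → ℝ, (∀ s ∈ I, HasDerivAt Z (v s (Z s)) s) →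
      (∀ s ∈ I, mink (Z s) (Z₁ s) = 0) →
      ∀ s ∈ I, mink (Z s) (Z s) = mink (Z s₀) (Z s₀) := by
    intro Z hZd hα s hs
    refine const_of_deriv_zero hIopen hconv (φ := fun t => mink (Z t) (Z t)) ?_ hs hs₀
    intro t ht
    have hd := hasDerivAt_mink (hZd t ht) (hZd t ht)
    have hval : mink (v t (Z t)) (Z t) + mink (Z t) (v t (Z t)) = 0 := by
      rw [hvdef]
      simp only []
      rw [mink_smul_left, mink_smul_right, mink_comm (Z₁ t) (Z t), hα t ht]
      ring
    rwa [hval] at hd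
  have hZ₂Z₂ : ∀ s ∈ I, mink (Z₂ s) (Z₂ s) = 1 := by
    intro s hs
    rw [hνconst Z₂ hZ₂d hZ₂Z₁ s hs, hZ₂0, hY₂Y₂]
  have hZ₃Z₃ : ∀ s ∈ I, mink (Z₃ s) (Z₃ s) = 1 := by
    intro s hs
    rw [hνconst Z₃ hZ₃d hZ₃Z₁ s hs, hZ₃0, hY₃Y₃]
  have hZ₂Z₃ : ∀ s ∈ I, mink (Z₂ s) (Z₃ s) = 0 := by
    intro s hs
    have hc : ∀ t ∈ I, HasDerivAt (fun t => mink (Z₂ t) (Z₃ t)) 0 t := by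
      intro t ht
      have hd := hasDerivAt_mink (hZ₂d t ht) (hZ₃d t ht)
      have hval : mink (v t (Z₂ t)) (Z₃ t) + mink (Z₂ t) (v t (Z₃ t)) = 0 := by
        rw [hvdef]
        simp only []
        rw [mink_smul_left, mink_smul_right, mink_comm (Z₁ t) (Z₃ t), hZ₃Z₁ t ht,
          hZ₂Z₁ t ht]
        ring
      rwa [hval] at hd
    have h' : mink (Z₂ s) (Z₃ s) = mink (Z₂ s₀) (Z₃ s₀) :=
      const_of_deriv_zero hIopen hconv (φ := fun t => mink (Z₂ t) (Z₃ t)) hc hs hs₀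
    rw [h', hZ₂0, hZ₃0, hY₂Y₃]
  -- the coefficient functions
  set x₂ : ℝ → ℝ := fun s => mink (W s) (Z₂ s) with hx₂def
  set x₃ : ℝ → ℝ := fun s => mink (W s) (Z₃ s) with hx₃def
  have hx₂s : ContDiffOn ℝ (⊤ : ℕ∞) x₂ I := contDiffOn_mink hWs hZ₂s
  have hx₃s : ContDiffOn ℝ (⊤ : ℕ∞) x₃ I := contDiffOn_mink hWs hZ₃s
  refine ⟨Z₁, Z₂, Z₃, κ, x₂, x₃, ⟨hZ₁s, hZ₂s, hZ₃s, ?_⟩, ⟨hκs, hx₂s, hx₃s⟩, ?_⟩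
  · intro s hs
    exact ⟨hZ₁Z₁ s hs, hZ₂Z₂ s hs, hZ₃Z₃ s hs,
      (mink_comm _ _).trans (hZ₂Z₁ s hs), (mink_comm _ _).trans (hZ₃Z₁ s hs),
      hZ₂Z₃ s hs, (mink_comm _ _).trans (hZ₁T s hs), (mink_comm _ _).trans (hZ₂T s hs),
      (mink_comm _ _).trans (hZ₃T s hs)⟩
  · intro s hs
    have hframe := expansion (hTT s hs) (hZ₁Z₁ s hs) (hZ₂Z₂ s hs) (hZ₃Z₃ s hs)
      ((mink_comm _ _).trans (hZ₂Z₁ s hs)) ((mink_comm _ _).trans (hZ₃Z₁ s hs))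
      (hZ₂Z₃ s hs) ((mink_comm _ _).trans (hZ₁T s hs)) ((mink_comm _ _).trans (hZ₂T s hs))
      ((mink_comm _ _).trans (hZ₃T s hs)) (W s)
    rw [hWT s hs, hWZ₁ s hs, mink_comm (W s) (Z₂ s), mink_comm (W s) (Z₃ s)] at hframe
    refine ⟨?_, ?_, ?_, ?_⟩
    · rw [← hAdef, hAZ s hs]
    · rw [← hWdef]
      rw [hframe]
      rw [mink_comm (Z₂ s) (W s), mink_comm (Z₃ s) (W s)]
      rw [hx₂def, hx₃def]
      simp only [neg_neg, zero_smul, add_zero]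
      rfl
    · rw [(hZ₂d s hs).deriv, hvdef]
      simp only []
      rw [hx₂def]
      simp only []
      rw [mink_comm (W s) (Z₂ s)]
    · rw [(hZ₃d s hs).deriv, hvdef]
      simp only []
      rw [hx₃def]
      simp only []
      rw [mink_comm (W s) (Z₃ s)]
end
end

section
/- Define γ : ℝ → 𝕃⁴ by γ(t) = (t, e^{-1/t}, 0, 0) for t > 0, γ(0) = (0,0,0,0), and γ(t) = (t, 0, e^{1/t}, 0) for t < 0. Then γ is a smooth curve with ⟨γ'(t),γ'(t)⟩ < 0 for all t (a regular time-like curve), and, with unit tangent T(t) := γ'(t)/√(-⟨γ'(t),γ'(t)⟩), there exist no smooth maps D₁ : ℝ → ℝ⁴ and d₁ : ℝ → ℝ satisfying ⟨D₁,D₁⟩ = 1, ⟨T,D₁⟩ = 0 and T' = d₁D₁ pointwise. -/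
open Set Real

noncomputable section

/-- The curve of Example `noD`: `γ(t) = (t, e^{-1/t}, 0, 0)` for `t > 0`, `γ(0) = 0`,
`γ(t) = (t, 0, e^{1/t}, 0)` for `t < 0`. -/
def gammaNoD : ℝ → Fin 4 → ℝ := fun t =>
  if 0 < t then ![t, Real.exp (-(1 / t)), 0, 0]
  else if t < 0 then ![t, 0, Real.exp (1 / t), 0]
  else ![0, 0, 0, 0]

/-- The unit tangent vector `T(t) = γ'(t) / √(-⟨γ'(t), γ'(t)⟩)` of `gammaNoD`. -/
def unitTangentNoD : ℝ → Fin 4 → ℝ := fun t =>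
  (Real.sqrt (-(mink (deriv gammaNoD t) (deriv gammaNoD t))))⁻¹ • deriv gammaNoD t

def phi (x : ℝ) : ℝ := x⁻¹ ^ 2 * expNegInvGlue x
def psi (x : ℝ) : ℝ := (x⁻¹ ^ 4 - 2 * x⁻¹ ^ 3) * expNegInvGlue x

open Polynomial in
lemma hasDerivAt_glue (x : ℝ) : HasDerivAt expNegInvGlue (phi x) x := by
  simpa [phi] using expNegInvGlue.hasDerivAt_polynomial_eval_inv_mul 1 x

open Polynomial in
lemma hasDerivAt_phi (x : ℝ) : HasDerivAt phi (psi x) x := by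
  have h := expNegInvGlue.hasDerivAt_polynomial_eval_inv_mul (X ^ 2) x
  have h1 : (fun x : ℝ => eval x⁻¹ (X ^ 2) * expNegInvGlue x) = phi := by
    funext y; simp [phi]
  have h2 : eval x⁻¹ (X ^ 2 * (X ^ 2 - derivative (X ^ 2 : ℝ[X]))) * expNegInvGlue x = psi x := by
    have he : eval x⁻¹ (X ^ 2 * (X ^ 2 - derivative (X ^ 2 : ℝ[X]))) = x⁻¹ ^ 4 - 2 * x⁻¹ ^ 3 := by
      simp; ring
    rw [he, psi]
  rwa [h1, h2] at h

lemma phi_of_nonpos {x : ℝ} (hx : x ≤ 0) : phi x = 0 := by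
  simp [phi, expNegInvGlue.zero_of_nonpos hx]

lemma phi_nonneg (x : ℝ) : 0 ≤ phi x := mul_nonneg (by positivity) (expNegInvGlue.nonneg x)

lemma sq_lt_exp {u : ℝ} (hu : 0 < u) : u ^ 2 < Real.exp u := by
  have h := Real.sum_le_exp_of_nonneg hu.le 4
  have : (1 : ℝ) + u + u ^ 2 / 2 + u ^ 3 / 6 ≤ Real.exp u := by
    simpa [Finset.sum_range_succ, Nat.factorial] using h
  nlinarith [sq_nonneg (u - 1), hu.le]

lemma phi_lt_one (x : ℝ) : phi x < 1 := by
  rcases le_or_gt x 0 with hx | hx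
  · rw [phi_of_nonpos hx]; norm_num
  · have hinv : 0 < x⁻¹ := inv_pos.2 hx
    have h := sq_lt_exp hinv
    have hglue : expNegInvGlue x = (Real.exp x⁻¹)⁻¹ := by
      simp [expNegInvGlue, hx.not_ge, Real.exp_neg]
    rw [phi, hglue]
    calc x⁻¹ ^ 2 * (Real.exp x⁻¹)⁻¹ < Real.exp x⁻¹ * (Real.exp x⁻¹)⁻¹ :=
          mul_lt_mul_of_pos_right h (inv_pos.2 (Real.exp_pos _))
      _ = 1 := mul_inv_cancel₀ (Real.exp_pos _).ne'

lemma psi_pos {x : ℝ} (h0 : 0 < x) (h2 : x < 1/2) : 0 < psi x := by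
  have h : (2 : ℝ) < x⁻¹ := by
    rw [lt_inv_comm₀ (by norm_num) h0] <;> linarith
  have hp3 : 0 < x⁻¹ ^ 3 := pow_pos (inv_pos.2 h0) 3
  have hx4 : 2 * x⁻¹ ^ 3 < x⁻¹ ^ 4 := by nlinarith
  exact mul_pos (by linarith) (expNegInvGlue.pos_of_pos h0)

lemma gamma_eq : gammaNoD = fun t => ![t, expNegInvGlue t, expNegInvGlue (-t), 0] := by
  funext t
  rcases lt_trichotomy t 0 with ht | rfl | ht
  · have h1 : expNegInvGlue t = 0 := expNegInvGlue.zero_of_nonpos ht.le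
    have h2 : expNegInvGlue (-t) = Real.exp (1 / t) := by
      rw [expNegInvGlue]
      rw [if_neg (by linarith)]
      congr 1
      rw [inv_neg, neg_neg, one_div]
    simp only [gammaNoD, if_neg (by linarith : ¬ 0 < t), if_pos ht, h1, h2]
  · simp [gammaNoD, expNegInvGlue.zero]
  · have h1 : expNegInvGlue t = Real.exp (-(1 / t)) := by
      rw [expNegInvGlue, if_neg (by linarith), one_div]
    have h2 : expNegInvGlue (-t) = 0 := expNegInvGlue.zero_of_nonpos (by linarith)
    simp only [gammaNoD, if_pos ht, h1, h2]

lemma smooth_gamma : ContDiff ℝ (⊤ : ℕ∞) gammaNoD := by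
  rw [gamma_eq]
  apply contDiff_pi.2
  intro i
  fin_cases i <;> simp
  · exact contDiff_id
  · exact expNegInvGlue.contDiff
  · exact expNegInvGlue.contDiff.comp contDiff_neg
  · exact contDiff_const

lemma hasDerivAt_gamma (t : ℝ) : HasDerivAt gammaNoD ![1, phi t, -phi (-t), 0] t := by
  rw [gamma_eq]
  apply hasDerivAt_pi.2
  intro i
  fin_cases i <;> simp
  · exact hasDerivAt_id t
  · exact hasDerivAt_glue t
  · have h := (hasDerivAt_glue (-t)).comp t (hasDerivAt_neg t)
    simpa [Function.comp_def] using h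
  · exact hasDerivAt_const t 0

lemma deriv_gamma (t : ℝ) : deriv gammaNoD t = ![1, phi t, -phi (-t), 0] :=
  (hasDerivAt_gamma t).deriv

lemma mink_deriv (t : ℝ) :
    mink (deriv gammaNoD t) (deriv gammaNoD t) = -1 + phi t ^ 2 + phi (-t) ^ 2 := by
  rw [deriv_gamma]; simp [mink]; ring

lemma mink_deriv_neg (t : ℝ) : mink (deriv gammaNoD t) (deriv gammaNoD t) < 0 := by
  rw [mink_deriv]
  rcases le_or_gt t 0 with ht | ht
  · rw [phi_of_nonpos ht]
    have h1 := phi_lt_one (-t); have h2 := phi_nonneg (-t)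
    nlinarith
  · rw [phi_of_nonpos (by linarith : -t ≤ 0)]
    have h1 := phi_lt_one t; have h2 := phi_nonneg t
    nlinarith

lemma unitT_eq (t : ℝ) :
    unitTangentNoD t
      = (Real.sqrt (1 - phi t ^ 2 - phi (-t) ^ 2))⁻¹ • ![1, phi t, -phi (-t), 0] := by
  rw [unitTangentNoD, mink_deriv, deriv_gamma]
  congr 2
  ring

lemma unitT_zero : unitTangentNoD 0 = ![1, 0, 0, 0] := by
  funext i
  fin_cases i <;>
    simp [unitT_eq, phi_of_nonpos (le_refl (0:ℝ)), Real.sqrt_one]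

-- derivative helpers on the positive side
lemma hasDerivAt_G {t : ℝ} :
    HasDerivAt (fun s => (Real.sqrt (1 - phi s ^ 2))⁻¹)
      (phi t * psi t / Real.sqrt (1 - phi t ^ 2) ^ 3) t := by
  have hp0 := phi_nonneg t
  have hp1 := phi_lt_one t
  have hpos : 0 < 1 - phi t ^ 2 := by nlinarith
  have hq : 0 < Real.sqrt (1 - phi t ^ 2) := Real.sqrt_pos.2 hpos
  have hq2 : Real.sqrt (1 - phi t ^ 2) ^ 2 = 1 - phi t ^ 2 := Real.sq_sqrt hpos.le
  have hu : HasDerivAt (fun s => 1 - phi s ^ 2) (-(2 * phi t * psi t)) t := by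
    have := ((hasDerivAt_phi t).pow 2).const_sub 1
    refine this.congr_deriv (Eq.symm ?_)
    push_cast
    ring
  have hsq : HasDerivAt (fun s => Real.sqrt (1 - phi s ^ 2))
      (1 / (2 * Real.sqrt (1 - phi t ^ 2)) * -(2 * phi t * psi t)) t :=
    (Real.hasDerivAt_sqrt hpos.ne').comp t hu
  have := hsq.inv hq.ne'
  refine this.congr_deriv (Eq.symm ?_)
  field_simp

lemma hasDerivAt_H {t : ℝ} :
    HasDerivAt (fun s => (Real.sqrt (1 - phi s ^ 2))⁻¹ * phi s)
      (psi t / Real.sqrt (1 - phi t ^ 2) ^ 3) t := by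
  have hp0 := phi_nonneg t
  have hp1 := phi_lt_one t
  have hpos : 0 < 1 - phi t ^ 2 := by nlinarith
  have hq : 0 < Real.sqrt (1 - phi t ^ 2) := Real.sqrt_pos.2 hpos
  have hq2 : Real.sqrt (1 - phi t ^ 2) ^ 2 = 1 - phi t ^ 2 := Real.sq_sqrt hpos.le
  have := hasDerivAt_G.mul (hasDerivAt_phi t)
  refine this.congr_deriv (Eq.symm ?_)
  field_simp
  linear_combination (-(psi t)) * hq2

lemma right_key {t : ℝ} (h0 : 0 < t) (h2 : t < 1/2) :
    HasDerivAt unitTangentNoD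
      ![phi t * psi t / Real.sqrt (1 - phi t ^ 2) ^ 3,
        psi t / Real.sqrt (1 - phi t ^ 2) ^ 3, 0, 0] t := by
  have hEq : (fun s => ![(Real.sqrt (1 - phi s ^ 2))⁻¹,
      (Real.sqrt (1 - phi s ^ 2))⁻¹ * phi s, 0, 0]) =ᶠ[nhds t] unitTangentNoD := by
    filter_upwards [Ioi_mem_nhds h0] with s hs
    rw [unitT_eq, phi_of_nonpos (by simpa using le_of_lt hs : -s ≤ 0)]
    funext i
    fin_cases i <;> simp
  apply HasDerivAt.congr_of_eventuallyEq _ hEq.symm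
  apply hasDerivAt_pi.2
  intro i
  fin_cases i <;> simp
  · exact hasDerivAt_G
  · exact hasDerivAt_H
  · exact hasDerivAt_const t 0
  · exact hasDerivAt_const t 0

lemma left_key {t : ℝ} (h0 : t < 0) (h2 : -(1/2) < t) :
    HasDerivAt unitTangentNoD
      ![phi (-t) * psi (-t) / Real.sqrt (1 - phi (-t) ^ 2) ^ 3 * (-1), 0,
        -(psi (-t) / Real.sqrt (1 - phi (-t) ^ 2) ^ 3 * (-1)), 0] t := by
  have hEq : (fun s => ![(Real.sqrt (1 - phi (-s) ^ 2))⁻¹, 0,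
      -((Real.sqrt (1 - phi (-s) ^ 2))⁻¹ * phi (-s)), 0]) =ᶠ[nhds t] unitTangentNoD := by
    filter_upwards [Iio_mem_nhds h0] with s hs
    rw [unitT_eq, phi_of_nonpos (le_of_lt hs)]
    funext i
    fin_cases i <;> simp
  apply HasDerivAt.congr_of_eventuallyEq _ hEq.symm
  apply hasDerivAt_pi.2
  intro i
  fin_cases i <;> simp
  · have h := HasDerivAt.comp t (hasDerivAt_G (t := -t)) (hasDerivAt_neg t)
    simpa [Function.comp_def] using h
  · exact hasDerivAt_const t 0
  · have h := (HasDerivAt.comp t (hasDerivAt_H (t := -t)) (hasDerivAt_neg t)).neg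
    simpa [Function.comp_def, Pi.neg_def] using h
  · exact hasDerivAt_const t 0

lemma sqrt_phi_pos (t : ℝ) : 0 < Real.sqrt (1 - phi t ^ 2) := by
  have h1 := phi_nonneg t; have h2 := phi_lt_one t
  exact Real.sqrt_pos.2 (by nlinarith)


/-- `gammaNoD` is a smooth regular time-like curve that admits no smooth
unit space-like normal field `D₁` with `T' = d₁ D₁`. -/
theorem stmt_11 :
    ContDiff ℝ (⊤ : ℕ∞) gammaNoD ∧
    (∀ t : ℝ, mink (deriv gammaNoD t) (deriv gammaNoD t) < 0) ∧
    ¬ ∃ (D₁ : ℝ → Fin 4 → ℝ) (d₁ : ℝ → ℝ),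
        ContDiff ℝ (⊤ : ℕ∞) D₁ ∧ ContDiff ℝ (⊤ : ℕ∞) d₁ ∧
        ∀ t : ℝ,
          mink (D₁ t) (D₁ t) = 1 ∧ mink (unitTangentNoD t) (D₁ t) = 0 ∧
          deriv unitTangentNoD t = d₁ t • D₁ t := by
  refine ⟨smooth_gamma, mink_deriv_neg, ?_⟩
  rintro ⟨D₁, d₁, hD, -, hall⟩
  -- right side: components 2 and 3 of D₁ vanish on (0, 1/2)
  have hR : ∀ t ∈ Ioo (0:ℝ) (1/2), D₁ t 2 = 0 ∧ D₁ t 3 = 0 := by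
    rintro t ⟨h0, h2⟩
    have heq := (hall t).2.2
    rw [(right_key h0 h2).deriv] at heq
    have hval : 0 < psi t / Real.sqrt (1 - phi t ^ 2) ^ 3 :=
      div_pos (psi_pos h0 h2) (pow_pos (sqrt_phi_pos t) 3)
    have h1 : psi t / Real.sqrt (1 - phi t ^ 2) ^ 3 = d₁ t * D₁ t 1 := by
      simpa using congrFun heq 1
    have hd1 : d₁ t ≠ 0 := by
      intro h; rw [h, zero_mul] at h1; exact hval.ne' h1
    constructor
    · have h2' : (0:ℝ) = d₁ t * D₁ t 2 := by simpa using congrFun heq 2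
      rcases mul_eq_zero.1 h2'.symm with h | h
      · exact absurd h hd1
      · exact h
    · have h3' : (0:ℝ) = d₁ t * D₁ t 3 := by simpa using congrFun heq 3
      rcases mul_eq_zero.1 h3'.symm with h | h
      · exact absurd h hd1
      · exact h
  -- left side: components 1 and 3 of D₁ vanish on (-1/2, 0)
  have hL : ∀ t ∈ Ioo (-(1/2):ℝ) 0, D₁ t 1 = 0 := by
    rintro t ⟨h2, h0⟩
    have heq := (hall t).2.2
    rw [(left_key h0 h2).deriv] at heq
    have hnt0 : 0 < -t := by linarith
    have hnt2 : -t < 1/2 := by linarith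
    have hval : 0 < psi (-t) / Real.sqrt (1 - phi (-t) ^ 2) ^ 3 :=
      div_pos (psi_pos hnt0 hnt2) (pow_pos (sqrt_phi_pos (-t)) 3)
    have h1 : psi (-t) / Real.sqrt (1 - phi (-t) ^ 2) ^ 3 = d₁ t * D₁ t 2 := by
      simpa using congrFun heq 2
    have hd1 : d₁ t ≠ 0 := by
      intro h; rw [h, zero_mul] at h1; exact hval.ne' h1
    have h1' : (0:ℝ) = d₁ t * D₁ t 1 := by simpa using congrFun heq 1
    rcases mul_eq_zero.1 h1'.symm with h | h
    · exact absurd h hd1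
    · exact h
  -- take limits at 0
  have hcont : ∀ i : Fin 4, Continuous fun s => D₁ s i := fun i =>
    (continuous_apply i).comp hD.continuous
  have hmemR : Ioo (0:ℝ) (1/2) ∈ nhdsWithin (0:ℝ) (Ioi 0) :=
    Ioo_mem_nhdsGT_of_mem ⟨le_rfl, by norm_num⟩
  have hmemL : Ioo (-(1/2):ℝ) 0 ∈ nhdsWithin (0:ℝ) (Iio 0) :=
    Ioo_mem_nhdsLT_of_mem ⟨by norm_num, le_rfl⟩
  have limR : ∀ i : Fin 4, (∀ t ∈ Ioo (0:ℝ) (1/2), D₁ t i = 0) → D₁ 0 i = 0 := by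
    intro i hzero
    have ht : Filter.Tendsto (fun s => D₁ s i) (nhdsWithin 0 (Ioi 0)) (nhds (D₁ 0 i)) :=
      ((hcont i).tendsto 0).mono_left nhdsWithin_le_nhds
    have ht0 : Filter.Tendsto (fun s => D₁ s i) (nhdsWithin 0 (Ioi 0)) (nhds 0) := by
      apply Filter.Tendsto.congr' _ tendsto_const_nhds
      filter_upwards [hmemR] with s hs
      exact (hzero s hs).symm
    exact tendsto_nhds_unique ht ht0
  have h02 : D₁ 0 2 = 0 := limR 2 fun t ht => (hR t ht).1
  have h03 : D₁ 0 3 = 0 := limR 3 fun t ht => (hR t ht).2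
  have h01 : D₁ 0 1 = 0 := by
    have ht : Filter.Tendsto (fun s => D₁ s 1) (nhdsWithin 0 (Iio 0)) (nhds (D₁ 0 1)) :=
      ((hcont 1).tendsto 0).mono_left nhdsWithin_le_nhds
    have ht0 : Filter.Tendsto (fun s => D₁ s 1) (nhdsWithin 0 (Iio 0)) (nhds 0) := by
      apply Filter.Tendsto.congr' _ tendsto_const_nhds
      filter_upwards [hmemL] with s hs
      exact (hL s hs).symm
    exact tendsto_nhds_unique ht ht0
  have h00 : D₁ 0 0 = 0 := by
    have := (hall 0).2.1
    rw [unitT_zero] at this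
    simp [mink] at this
    linarith
  have hone := (hall 0).1
  rw [mink, h00, h01, h02, h03] at hone
  norm_num at hone
end
end

section
/- Let γ : I → 𝕃⁴ be a time-like curve parametrized by proper time that admits a Frenet frame (T,F₁,F₂,F₃) with functions f₁,f₂,f₃ (f₁ > 0, f₂ > 0). Then every generalized Bishop frame (T,Z₁,Z₂,Z₃) of type F along γ, with coefficient functions x₁,x₂,x₃, coincides with the Frenet frame up to sign: there exist ε₁,ε₂,ε₃ ∈ {-1,1} such that Zᵢ = εᵢFᵢ on I for i = 1,2,3, and moreover x₁ = ε₁f₁, x₂ = ε₁ε₂f₂, x₃ = ε₂ε₃f₃. -/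
open Set Real

noncomputable section

lemma mink_comm (x y : Fin 4 → ℝ) : mink x y = mink y x := by unfold mink; ring

lemma mink_smul_left (a : ℝ) (x y : Fin 4 → ℝ) : mink (a • x) y = a * mink x y := by
  simp only [mink, Pi.smul_apply, smul_eq_mul]; ring

lemma mink_smul_right (a : ℝ) (x y : Fin 4 → ℝ) : mink x (a • y) = a * mink x y := by
  simp only [mink, Pi.smul_apply, smul_eq_mul]; ring

lemma mink_sub_right (x y z : Fin 4 → ℝ) : mink x (y - z) = mink x y - mink x z := by
  simp only [mink, Pi.sub_apply]; ring

lemma smul_cancel {u v : Fin 4 → ℝ} {a b e : ℝ} (h : a • u = b • v) (ha : a ≠ 0)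
    (he : b = e * a) : u = e • v := by
  have h2 : a⁻¹ * b = e := by rw [he]; field_simp
  calc u = a⁻¹ • (a • u) := by rw [smul_smul, inv_mul_cancel₀ ha, one_smul]
  _ = a⁻¹ • (b • v) := by rw [h]
  _ = e • v := by rw [smul_smul, h2]

lemma sign_const {I : Set ℝ} (hI : IsPreconnected I) {g : ℝ → ℝ}
    (hg : ContinuousOn g I) (h1 : ∀ s ∈ I, g s * g s = 1)
    {s₀ : ℝ} (hs₀ : s₀ ∈ I) : ∀ s ∈ I, g s = g s₀ := by
  intro s hs
  by_contra hne
  have h₁ := mul_self_eq_one_iff.mp (h1 s hs)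
  have h₂ := mul_self_eq_one_iff.mp (h1 s₀ hs₀)
  have himg : IsPreconnected (g '' I) := hI.image g hg
  have hord := himg.ordConnected
  have h0 : (0 : ℝ) ∈ Set.uIcc (g s) (g s₀) := by
    rcases h₁ with h₁ | h₁ <;> rcases h₂ with h₂ | h₂ <;>
      simp_all [Set.mem_uIcc] <;> norm_num
  have hsub : Set.uIcc (g s) (g s₀) ⊆ g '' I :=
    hord.uIcc_subset ⟨s, hs, rfl⟩ ⟨s₀, hs₀, rfl⟩
  obtain ⟨y, hy, hgy⟩ := hsub h0
  have := h1 y hy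
  rw [hgy] at this
  norm_num at this

lemma orth_zero (t a b c w : Fin 4 → ℝ)
    (htt : mink t t = -1) (haa : mink a a = 1) (hbb : mink b b = 1) (hcc : mink c c = 1)
    (hta : mink t a = 0) (htb : mink t b = 0) (htc : mink t c = 0)
    (hab : mink a b = 0) (hac : mink a c = 0) (hbc : mink b c = 0)
    (hwt : mink t w = 0) (hwa : mink a w = 0) (hwb : mink b w = 0) (hwc : mink c w = 0) :
    w = 0 := by
  simp only [mink] at *
  set v : Fin 4 → Fin 4 → ℝ := ![t, a, b, c] with hv
  set η : Fin 4 → ℝ := ![-1, 1, 1, 1] with hη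
  set M : Matrix (Fin 4) (Fin 4) ℝ := Matrix.of v with hM
  set Q : Matrix (Fin 4) (Fin 4) ℝ := Matrix.of (fun k j => η k * η j * v j k) with hQ
  have hMQ : M * Q = 1 := by
    ext i j
    fin_cases i <;> fin_cases j <;>
      simp [hM, hQ, hv, hη, Matrix.mul_apply, Fin.sum_univ_four, Matrix.one_apply] <;>
      first
        | linear_combination htt | linear_combination haa | linear_combination hbb
        | linear_combination hcc | linear_combination hta | linear_combination htb
        | linear_combination htc | linear_combination hab | linear_combination hac
        | linear_combination hbc
        | linear_combination -htt | linear_combination -hta | linear_combination -htb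
        | linear_combination -htc
  have hQM : Q * M = 1 := mul_eq_one_comm.mp hMQ
  set y : Fin 4 → ℝ := ![-(w 0), w 1, w 2, w 3] with hy
  have hMy : M.mulVec y = 0 := by
    ext i
    fin_cases i <;>
      simp [hM, hy, hv, Matrix.mulVec, dotProduct, Fin.sum_univ_four] <;>
      first
        | linear_combination hwt | linear_combination hwa | linear_combination hwb
        | linear_combination hwc
  have hy0 : y = 0 := by
    calc y = (Q * M).mulVec y := by rw [hQM, Matrix.one_mulVec]
    _ = Q.mulVec (M.mulVec y) := by rw [Matrix.mulVec_mulVec]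
    _ = 0 := by rw [hMy, Matrix.mulVec_zero]
  have h0 := congrFun hy0 0
  have h1 := congrFun hy0 1
  have h2 := congrFun hy0 2
  have h3 := congrFun hy0 3
  simp [hy] at h0 h1 h2 h3
  ext i
  fin_cases i <;> simp [h0, h1, h2, h3]

/-- if a time-like curve parametrized by proper time admits a Frenet frame,
then every generalized Bishop frame of type F coincides with the Frenet frame up to sign,
and the coefficient functions agree up to the corresponding signs. -/
theorem stmt_12 (I : Set ℝ) (hIopen : IsOpen I) (hIconn : I.OrdConnected)
    (γ : ℝ → Fin 4 → ℝ) (hγ : ProperTime I γ)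
    -- the Frenet frame
    (F₁ F₂ F₃ : ℝ → Fin 4 → ℝ) (f₁ f₂ f₃ : ℝ → ℝ)
    (hFr : OrthFrame I (deriv γ) F₁ F₂ F₃) (hf : Smooth3 I f₁ f₂ f₃)
    (hf₁pos : ∀ s ∈ I, 0 < f₁ s) (hf₂pos : ∀ s ∈ I, 0 < f₂ s)
    (hFrEq : ∀ s ∈ I,
      deriv (deriv γ) s = f₁ s • F₁ s ∧
      deriv F₁ s = f₁ s • deriv γ s + f₂ s • F₂ s ∧
      deriv F₂ s = (-(f₂ s)) • F₁ s + f₃ s • F₃ s ∧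
      deriv F₃ s = (-(f₃ s)) • F₂ s)
    -- an arbitrary generalized Bishop frame of type F
    (Z₁ Z₂ Z₃ : ℝ → Fin 4 → ℝ) (x₁ x₂ x₃ : ℝ → ℝ)
    (hZ : OrthFrame I (deriv γ) Z₁ Z₂ Z₃) (hx : Smooth3 I x₁ x₂ x₃)
    (hZEq : ∀ s ∈ I,
      deriv (deriv γ) s = x₁ s • Z₁ s ∧
      deriv Z₁ s = x₁ s • deriv γ s + x₂ s • Z₂ s ∧
      deriv Z₂ s = (-(x₂ s)) • Z₁ s + x₃ s • Z₃ s ∧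
      deriv Z₃ s = (-(x₃ s)) • Z₂ s) :
    ∃ ε₁ ε₂ ε₃ : ℝ, (ε₁ = 1 ∨ ε₁ = -1) ∧ (ε₂ = 1 ∨ ε₂ = -1) ∧ (ε₃ = 1 ∨ ε₃ = -1) ∧
      ∀ s ∈ I,
        Z₁ s = ε₁ • F₁ s ∧ Z₂ s = ε₂ • F₂ s ∧ Z₃ s = ε₃ • F₃ s ∧
        x₁ s = ε₁ * f₁ s ∧ x₂ s = ε₁ * ε₂ * f₂ s ∧ x₃ s = ε₂ * ε₃ * f₃ s := by
  obtain ⟨hZ₁s, hZ₂s, hZ₃s, hZo⟩ := hZ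
  obtain ⟨hF₁s, hF₂s, hF₃s, hFo⟩ := hFr
  rcases I.eq_empty_or_nonempty with hIe | ⟨s₀, hs₀⟩
  · exact ⟨1, 1, 1, Or.inl rfl, Or.inl rfl, Or.inl rfl,
      fun s hs => absurd hs (by simp [hIe])⟩
  have hpre : IsPreconnected I := hIconn.isPreconnected
  -- Step 1 : Z₁ = ε₁ • F₁ and x₁ = ε₁ f₁
  have key1 : ∀ s ∈ I, x₁ s • Z₁ s = f₁ s • F₁ s := fun s hs => by
    rw [← (hZEq s hs).1, (hFrEq s hs).1]
  have hx1sq : ∀ s ∈ I, x₁ s * x₁ s = f₁ s * f₁ s := by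
    intro s hs
    have h := congrArg (fun u => mink u u) (key1 s hs)
    simp only [mink_smul_left, mink_smul_right] at h
    rw [(hZo s hs).1, (hFo s hs).1] at h
    linear_combination h
  have hf₁ne : ∀ s ∈ I, f₁ s ≠ 0 := fun s hs => (hf₁pos s hs).ne'
  set g₁ : ℝ → ℝ := fun s => x₁ s / f₁ s with hg₁def
  have hg₁sq : ∀ s ∈ I, g₁ s * g₁ s = 1 := by
    intro s hs
    rw [hg₁def]
    field_simp [hf₁ne s hs]
    linear_combination hx1sq s hs
  have hg₁cont : ContinuousOn g₁ I := hx.1.continuousOn.div hf.1.continuousOn hf₁ne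
  set ε₁ : ℝ := g₁ s₀ with hε₁def
  have hε₁ : ε₁ = 1 ∨ ε₁ = -1 := mul_self_eq_one_iff.mp (hg₁sq s₀ hs₀)
  have hε₁sq : ε₁ * ε₁ = 1 := hg₁sq s₀ hs₀
  have hε₁ne : ε₁ ≠ 0 := by rcases hε₁ with h | h <;> rw [h] <;> norm_num
  have hx₁ : ∀ s ∈ I, x₁ s = ε₁ * f₁ s := by
    intro s hs
    have h := sign_const hpre hg₁cont hg₁sq hs₀ s hs
    rw [hg₁def] at h
    exact (div_eq_iff (hf₁ne s hs)).mp h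
  have hx₁ne : ∀ s ∈ I, x₁ s ≠ 0 := by
    intro s hs
    rw [hx₁ s hs]
    exact mul_ne_zero hε₁ne (hf₁ne s hs)
  have hZ₁F₁ : ∀ s ∈ I, Z₁ s = ε₁ • F₁ s := by
    intro s hs
    refine smul_cancel (key1 s hs) (hx₁ne s hs) ?_
    rw [hx₁ s hs]
    linear_combination f₁ s * hε₁sq.symm
  -- Step 2 : Z₂ = ε₂ • F₂ and x₂ = ε₁ ε₂ f₂
  have hdZ₁ : ∀ s ∈ I, deriv Z₁ s = ε₁ • deriv F₁ s := by
    intro s hs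
    have hev : Z₁ =ᶠ[nhds s] fun t => ε₁ • F₁ t := by
      filter_upwards [hIopen.mem_nhds hs] with t ht using hZ₁F₁ t ht
    rw [hev.deriv_eq]
    rcases hε₁ with h | h
    · simp only [h, one_smul]
    · rw [h]; simp only [neg_smul, one_smul]; exact deriv.neg
  have key2 : ∀ s ∈ I, x₂ s • Z₂ s = (ε₁ * f₂ s) • F₂ s := by
    intro s hs
    have h1 := (hZEq s hs).2.1
    rw [hdZ₁ s hs, (hFrEq s hs).2.1, smul_add, smul_smul, smul_smul, ← hx₁ s hs] at h1
    exact (add_left_cancel h1).symm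
  have hx2sq : ∀ s ∈ I, x₂ s * x₂ s = f₂ s * f₂ s := by
    intro s hs
    have h := congrArg (fun u => mink u u) (key2 s hs)
    simp only [mink_smul_left, mink_smul_right] at h
    rw [(hZo s hs).2.1, (hFo s hs).2.1] at h
    linear_combination h + f₂ s * f₂ s * hε₁sq
  have hf₂ne : ∀ s ∈ I, f₂ s ≠ 0 := fun s hs => (hf₂pos s hs).ne'
  set g₂ : ℝ → ℝ := fun s => x₂ s / f₂ s with hg₂def
  have hg₂sq : ∀ s ∈ I, g₂ s * g₂ s = 1 := by
    intro s hs
    rw [hg₂def]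
    field_simp [hf₂ne s hs]
    linear_combination hx2sq s hs
  have hg₂cont : ContinuousOn g₂ I := hx.2.1.continuousOn.div hf.2.1.continuousOn hf₂ne
  set ε₂' : ℝ := g₂ s₀ with hε₂'def
  have hε₂' : ε₂' = 1 ∨ ε₂' = -1 := mul_self_eq_one_iff.mp (hg₂sq s₀ hs₀)
  have hε₂'sq : ε₂' * ε₂' = 1 := hg₂sq s₀ hs₀
  have hε₂'ne : ε₂' ≠ 0 := by rcases hε₂' with h | h <;> rw [h] <;> norm_num
  have hx₂' : ∀ s ∈ I, x₂ s = ε₂' * f₂ s := by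
    intro s hs
    have h := sign_const hpre hg₂cont hg₂sq hs₀ s hs
    rw [hg₂def] at h
    exact (div_eq_iff (hf₂ne s hs)).mp h
  set ε₂ : ℝ := ε₁ * ε₂' with hε₂def
  have hε₂ : ε₂ = 1 ∨ ε₂ = -1 := by
    rw [hε₂def]; rcases hε₁ with h | h <;> rcases hε₂' with h' | h' <;>
      rw [h, h'] <;> norm_num
  have hε₂sq : ε₂ * ε₂ = 1 := by
    rcases hε₂ with h | h <;> rw [h] <;> norm_num
  have hε₂ne : ε₂ ≠ 0 := by rcases hε₂ with h | h <;> rw [h] <;> norm_num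
  have hx₂ : ∀ s ∈ I, x₂ s = ε₁ * ε₂ * f₂ s := by
    intro s hs
    rw [hε₂def, hx₂' s hs]
    linear_combination ε₂' * f₂ s * hε₁sq.symm
  have hZ₂F₂ : ∀ s ∈ I, Z₂ s = ε₂ • F₂ s := by
    intro s hs
    refine smul_cancel (key2 s hs) ?_ ?_
    · rw [hx₂' s hs]; exact mul_ne_zero hε₂'ne (hf₂ne s hs)
    · rw [hε₂def, hx₂' s hs]
      linear_combination ε₁ * f₂ s * hε₂'sq.symm
  -- Step 3 : x₃ • Z₃ = (ε₂ f₃) • F₃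
  have hdZ₂ : ∀ s ∈ I, deriv Z₂ s = ε₂ • deriv F₂ s := by
    intro s hs
    have hev : Z₂ =ᶠ[nhds s] fun t => ε₂ • F₂ t := by
      filter_upwards [hIopen.mem_nhds hs] with t ht using hZ₂F₂ t ht
    rw [hev.deriv_eq]
    rcases hε₂ with h | h
    · simp only [h, one_smul]
    · rw [h]; simp only [neg_smul, one_smul]; exact deriv.neg
  have key3 : ∀ s ∈ I, x₃ s • Z₃ s = (ε₂ * f₃ s) • F₃ s := by
    intro s hs
    have h1 := (hZEq s hs).2.2.1
    rw [hdZ₂ s hs, (hFrEq s hs).2.2.1, smul_add, smul_smul, smul_smul,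
      hZ₁F₁ s hs, smul_smul, hx₂ s hs] at h1
    have hc : -(ε₁ * ε₂ * f₂ s) * ε₁ = ε₂ * -(f₂ s) := by
      linear_combination (-(ε₂ * f₂ s)) * hε₁sq
    rw [hc] at h1
    exact (add_left_cancel h1).symm
  -- Step 4 : Z₃ = ε₃ • F₃ and x₃ = ε₂ ε₃ f₃
  set g₃ : ℝ → ℝ := fun s => mink (Z₃ s) (F₃ s) with hg₃def
  have hZ₃F₃ : ∀ s ∈ I, Z₃ s = g₃ s • F₃ s := by
    intro s hs
    obtain ⟨hZ11, hZ22, hZ33, hZ12, hZ13, hZ23, hTZ1, hTZ2, hTZ3⟩ := hZo s hs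
    obtain ⟨hF11, hF22, hF33, hF12, hF13, hF23, hTF1, hTF2, hTF3⟩ := hFo s hs
    have hTT := hγ.2 s hs
    have hF1Z3 : mink (F₁ s) (Z₃ s) = 0 := by
      rw [hZ₁F₁ s hs, mink_smul_left] at hZ13
      exact (mul_eq_zero.mp hZ13).resolve_left hε₁ne
    have hF2Z3 : mink (F₂ s) (Z₃ s) = 0 := by
      rw [hZ₂F₂ s hs, mink_smul_left] at hZ23
      exact (mul_eq_zero.mp hZ23).resolve_left hε₂ne
    have hw := orth_zero (deriv γ s) (F₁ s) (F₂ s) (F₃ s) (Z₃ s - g₃ s • F₃ s)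
      hTT hF11 hF22 hF33 hTF1 hTF2 hTF3 hF12 hF13 hF23
      (by rw [mink_sub_right, mink_smul_right, hTZ3, hTF3]; ring)
      (by rw [mink_sub_right, mink_smul_right, hF1Z3, hF13]; ring)
      (by rw [mink_sub_right, mink_smul_right, hF2Z3, hF23]; ring)
      (by rw [mink_sub_right, mink_smul_right, hF33, mul_one, hg₃def,
            mink_comm (F₃ s) (Z₃ s)]; ring)
    have := sub_eq_zero.mp hw
    exact this
  have hg₃sq : ∀ s ∈ I, g₃ s * g₃ s = 1 := by
    intro s hs
    have h := (hZo s hs).2.2.1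
    rw [hZ₃F₃ s hs, mink_smul_left, mink_smul_right, (hFo s hs).2.2.1] at h
    linear_combination h
  have hg₃cont : ContinuousOn g₃ I := by
    have hA : ∀ i : Fin 4, ContinuousOn (fun s => Z₃ s i) I :=
      fun i => (continuous_apply i).comp_continuousOn hZ₃s.continuousOn
    have hB : ∀ i : Fin 4, ContinuousOn (fun s => F₃ s i) I :=
      fun i => (continuous_apply i).comp_continuousOn hF₃s.continuousOn
    rw [hg₃def]
    simp only [mink]
    exact ((((hA 0).mul (hB 0)).neg.add ((hA 1).mul (hB 1))).add
      ((hA 2).mul (hB 2))).add ((hA 3).mul (hB 3))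
  set ε₃ : ℝ := g₃ s₀ with hε₃def
  have hε₃ : ε₃ = 1 ∨ ε₃ = -1 := mul_self_eq_one_iff.mp (hg₃sq s₀ hs₀)
  have hε₃sq : ε₃ * ε₃ = 1 := hg₃sq s₀ hs₀
  have hg₃val : ∀ s ∈ I, g₃ s = ε₃ := fun s hs => sign_const hpre hg₃cont hg₃sq hs₀ s hs
  have hZ₃F₃' : ∀ s ∈ I, Z₃ s = ε₃ • F₃ s := by
    intro s hs
    rw [hZ₃F₃ s hs, hg₃val s hs]
  have hx₃ : ∀ s ∈ I, x₃ s = ε₂ * ε₃ * f₃ s := by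
    intro s hs
    have hk := key3 s hs
    rw [hZ₃F₃' s hs, smul_smul] at hk
    have h := congrArg (fun u => mink u (F₃ s)) hk
    simp only [mink_smul_left] at h
    rw [(hFo s hs).2.2.1] at h
    linear_combination ε₃ * h - x₃ s * hε₃sq
  exact ⟨ε₁, ε₂, ε₃, hε₁, hε₂, hε₃, fun s hs =>
    ⟨hZ₁F₁ s hs, hZ₂F₂ s hs, hZ₃F₃' s hs, hx₁ s hs, hx₂ s hs, hx₃ s hs⟩⟩
end
end
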